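/- arXiv:2306.00523 — 3 statements merged into one kernel-verified Lean document; each statement's English description precedes it below -/
import Mathlib

section
/- Let d ≥ 2, Θ : [0,∞) → (0,∞) increasing, and ρ ∈ L¹(ℝ^d) ∩ Y^Θ_ul(ℝ^d) nonnegative. Then for all x, y ∈ ℝ^d, ∫_{ℝ^d} |K(x−z) − K(y−z)| ρ(z) dz ≤ C_d (‖ρ‖_{L¹} + ‖ρ‖_{Y^Θ_ul}) · φ_Θ(|x−y|), where φ_Θ(r) = r|log r|Θ(|log r|) for r ∈ (0, e^{−d−1}), φ_Θ(0) = 0, and φ_Θ(r) = e^{−d−1}(d+1)Θ(d+1) for r ≥ e^{−d−1}. -/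
open MeasureTheory Real Set Metric
open scoped ENNReal

/-- The uniformly-localized `L^p` norm: `‖f‖_{L^p_ul} = sup_x ‖f‖_{L^p(B_1(x))}`. -/
noncomputable def ulNorm {d : ℕ} (p : ℝ≥0∞) (f : EuclideanSpace ℝ (Fin d) → ℝ) : ℝ≥0∞ :=
  ⨆ x : EuclideanSpace ℝ (Fin d),
    eLpNorm f p (volume.restrict (Metric.ball x 1))

/-- The uniformly-localized Yudovich norm `‖f‖_{Y^Θ_ul} = sup_{p≥1} ‖f‖_{L^p_ul}/Θ(p)`. -/
noncomputable def yudNorm {d : ℕ} (Θ : ℝ → ℝ) (f : EuclideanSpace ℝ (Fin d) → ℝ) : ℝ≥0∞ :=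
  ⨆ p : Set.Ici (1 : ℝ), ulNorm (ENNReal.ofReal (p : ℝ)) f / ENNReal.ofReal (Θ p)

/-- The modulus of continuity `φ_Θ` associated to a growth function `Θ`. -/
noncomputable def phiTheta (d : ℕ) (Θ : ℝ → ℝ) (r : ℝ) : ℝ :=
  if r = 0 then 0
  else if r < Real.exp (-((d : ℝ) + 1)) then r * |Real.log r| * Θ |Real.log r|
  else Real.exp (-((d : ℝ) + 1)) * ((d : ℝ) + 1) * Θ ((d : ℝ) + 1)

lemma pow_sub_pow_le_aux {a b : ℝ} (d : ℕ) (ha : 0 ≤ a) (hab : a ≤ b) :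
    b ^ d - a ^ d ≤ d * b ^ (d - 1) * (b - a) := by
  have h := geom_sum₂_mul b a d
  rw [← h]
  have hb : 0 ≤ b := ha.trans hab
  have : (∑ i ∈ Finset.range d, b ^ i * a ^ (d - 1 - i)) ≤ d * b ^ (d - 1) := by
    calc (∑ i ∈ Finset.range d, b ^ i * a ^ (d - 1 - i))
        ≤ ∑ i ∈ Finset.range d, b ^ (d - 1) := by
          apply Finset.sum_le_sum
          intro i hi
          simp only [Finset.mem_range] at hi
          calc b ^ i * a ^ (d - 1 - i) ≤ b ^ i * b ^ (d - 1 - i) := by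
                apply mul_le_mul_of_nonneg_left (pow_le_pow_left₀ ha hab _) (pow_nonneg hb _)
            _ = b ^ (i + (d - 1 - i)) := (pow_add b i _).symm
            _ = b ^ (d - 1) := by congr 1; omega
      _ = d * b ^ (d - 1) := by simp [mul_comm]
  have hba : 0 ≤ b - a := by linarith
  calc (∑ i ∈ Finset.range d, b ^ i * a ^ (d - 1 - i)) * (b - a)
      ≤ (d * b ^ (d - 1)) * (b - a) := mul_le_mul_of_nonneg_right this hba
    _ = d * b ^ (d - 1) * (b - a) := by ring

lemma Kdiff_aux {E : Type*} [NormedAddCommGroup E] [NormedSpace ℝ E] {d : ℕ} (hd : 1 ≤ d)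
    {a b : E} {t : ℝ} (ht : 0 < t) (ha : t ≤ ‖a‖) (hb : t ≤ ‖b‖) (hab : ‖a‖ ≤ ‖b‖) :
    ‖(‖a‖ ^ d)⁻¹ • a - (‖b‖ ^ d)⁻¹ • b‖ ≤ (d + 1) * ‖a - b‖ / t ^ d := by
  set A := ‖a‖ with hA
  set B := ‖b‖ with hB
  have hA0 : 0 < A := lt_of_lt_of_le ht ha
  have hB0 : 0 < B := lt_of_lt_of_le ht hb
  have hAd : (0:ℝ) < A ^ d := pow_pos hA0 d
  have hBd : (0:ℝ) < B ^ d := pow_pos hB0 d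
  have htd : (0:ℝ) < t ^ d := pow_pos ht d
  have key : (‖a‖ ^ d)⁻¹ • a - (‖b‖ ^ d)⁻¹ • b
      = (A ^ d)⁻¹ • (a - b) + ((A ^ d)⁻¹ - (B ^ d)⁻¹) • b := by
    rw [smul_sub, sub_smul]; abel
  rw [key]
  have hs : (B ^ d)⁻¹ ≤ (A ^ d)⁻¹ := by
    apply inv_anti₀ hAd (pow_le_pow_left₀ hA0.le hab d)
  have h1 : ‖(A ^ d)⁻¹ • (a - b)‖ ≤ ‖a - b‖ / t ^ d := by
    rw [norm_smul, Real.norm_eq_abs, abs_of_nonneg (inv_nonneg.mpr hAd.le)]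
    rw [div_eq_inv_mul]
    apply mul_le_mul_of_nonneg_right _ (norm_nonneg _)
    apply inv_anti₀ htd (pow_le_pow_left₀ ht.le ha d)
  have h2 : ‖((A ^ d)⁻¹ - (B ^ d)⁻¹) • b‖ ≤ d * ‖a - b‖ / t ^ d := by
    rw [norm_smul, Real.norm_eq_abs, abs_of_nonneg (by linarith : (0:ℝ) ≤ (A ^ d)⁻¹ - (B ^ d)⁻¹)]
    have hfrac : (A ^ d)⁻¹ - (B ^ d)⁻¹ = (B ^ d - A ^ d) / (A ^ d * B ^ d) := by
      field_simp
    rw [hfrac, ← hB]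
    have hnum : B ^ d - A ^ d ≤ d * B ^ (d - 1) * ‖a - b‖ := by
      refine le_trans (pow_sub_pow_le_aux d hA0.le hab) ?_
      apply mul_le_mul_of_nonneg_left _ (by positivity)
      calc B - A ≤ |B - A| := le_abs_self _
        _ = |A - B| := abs_sub_comm _ _
        _ ≤ ‖a - b‖ := abs_norm_sub_norm_le a b
    calc (B ^ d - A ^ d) / (A ^ d * B ^ d) * B
        ≤ (d * B ^ (d - 1) * ‖a - b‖) / (A ^ d * B ^ d) * B := by
          apply mul_le_mul_of_nonneg_right _ hB0.le
          apply div_le_div_of_nonneg_right hnum (by positivity)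
      _ = d * ‖a - b‖ / A ^ d * (B ^ (d - 1) * B / B ^ d) := by ring
      _ = d * ‖a - b‖ / A ^ d := by
          have hBpow : B ^ (d - 1) * B = B ^ d := by
            rw [← pow_succ]; congr 1; omega
          rw [hBpow, div_self hBd.ne', mul_one]
      _ ≤ d * ‖a - b‖ / t ^ d := by
          apply div_le_div_of_nonneg_left (by positivity) htd
          exact pow_le_pow_left₀ ht.le ha d
  calc ‖(A ^ d)⁻¹ • (a - b) + ((A ^ d)⁻¹ - (B ^ d)⁻¹) • b‖
      ≤ ‖(A ^ d)⁻¹ • (a - b)‖ + ‖((A ^ d)⁻¹ - (B ^ d)⁻¹) • b‖ := norm_add_le _ _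
    _ ≤ ‖a - b‖ / t ^ d + d * ‖a - b‖ / t ^ d := add_le_add h1 h2
    _ = (d + 1) * ‖a - b‖ / t ^ d := by ring

lemma Kdiff {E : Type*} [NormedAddCommGroup E] [NormedSpace ℝ E] {d : ℕ} (hd : 1 ≤ d)
    {a b : E} {t : ℝ} (ht : 0 < t) (ha : t ≤ ‖a‖) (hb : t ≤ ‖b‖) :
    ‖(‖a‖ ^ d)⁻¹ • a - (‖b‖ ^ d)⁻¹ • b‖ ≤ (d + 1) * ‖a - b‖ / t ^ d := by
  rcases le_total ‖a‖ ‖b‖ with h | h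
  · exact Kdiff_aux hd ht ha hb h
  · rw [norm_sub_rev, norm_sub_rev a b]
    exact Kdiff_aux hd ht hb ha h

lemma normK {E : Type*} [NormedAddCommGroup E] [NormedSpace ℝ E] {d : ℕ} (hd : 2 ≤ d) (z : E) :
    ‖(‖z‖ ^ d)⁻¹ • z‖ = (‖z‖ ^ (d - 1))⁻¹ := by
  rcases eq_or_ne z 0 with rfl | hz
  · simp [zero_pow (by omega : d - 1 ≠ 0)]
  · have h0 : (0:ℝ) < ‖z‖ := norm_pos_iff.mpr hz
    rw [norm_smul, Real.norm_eq_abs, abs_of_nonneg (by positivity)]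
    rw [show d = (d - 1) + 1 by omega, pow_succ]
    field_simp
    rw [show d - 1 + 1 - 1 = d - 1 by omega]

/-- volume constant -/
noncomputable def Vb (d : ℕ) : ℝ :=
  max ((volume (ball (0 : EuclideanSpace ℝ (Fin d)) 1)).toReal) 1

lemma one_le_Vb (d : ℕ) : 1 ≤ Vb d := le_max_right _ _

lemma ul_le {d : ℕ} (Θ : ℝ → ℝ) (hΘpos : ∀ q, 0 < Θ q) (ρ : EuclideanSpace ℝ (Fin d) → ℝ)
    {p : ℝ} (hp : 1 ≤ p) :
    ulNorm (ENNReal.ofReal p) ρ ≤ ENNReal.ofReal (Θ p) * yudNorm Θ ρ := by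
  have h := le_iSup (fun q : Set.Ici (1:ℝ) =>
    ulNorm (ENNReal.ofReal (q : ℝ)) ρ / ENNReal.ofReal (Θ q)) (⟨p, hp⟩ : Set.Ici (1:ℝ))
  rw [← yudNorm] at h
  have hne : ENNReal.ofReal (Θ p) ≠ 0 := by
    simp [ENNReal.ofReal_eq_zero, not_le, hΘpos p]
  rw [ENNReal.div_le_iff_le_mul (Or.inl hne) (Or.inl ENNReal.ofReal_ne_top)] at h
  calc ulNorm (ENNReal.ofReal p) ρ ≤ yudNorm Θ ρ * ENNReal.ofReal (Θ p) := h
    _ = ENNReal.ofReal (Θ p) * yudNorm Θ ρ := mul_comm _ _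

lemma mass_ball {d : ℕ} (hd : 2 ≤ d) (Θ : ℝ → ℝ) (hΘpos : ∀ q, 0 < Θ q)
    (ρ : EuclideanSpace ℝ (Fin d) → ℝ) (hρm : Measurable ρ)
    {c : EuclideanSpace ℝ (Fin d)} {s p : ℝ} (hs0 : 0 < s) (hs1 : s ≤ 1) (hp : 1 ≤ p)
    (hρ0 : ∀ z, 0 ≤ ρ z) :
    ∫⁻ z in ball c s, ENNReal.ofReal (ρ z)
      ≤ ENNReal.ofReal (Θ p * Vb d * s ^ ((d : ℝ) - d / p)) * yudNorm Θ ρ := by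
  haveI : Nonempty (Fin d) := ⟨⟨0, by omega⟩⟩
  haveI : Nontrivial (EuclideanSpace ℝ (Fin d)) := by
    infer_instance
  have hp0 : 0 < p := lt_of_lt_of_le one_pos hp
  set q : ℝ≥0∞ := ENNReal.ofReal p with hq
  have hq1 : (1 : ℝ≥0∞) ≤ q := by
    rw [hq]; exact ENNReal.one_le_ofReal.mpr hp
  -- step 1 : L¹ norm on ball = lintegral
  have e1 : ∫⁻ z in ball c s, ENNReal.ofReal (ρ z)
      = eLpNorm ρ 1 (volume.restrict (ball c s)) := by
    rw [eLpNorm_one_eq_lintegral_enorm]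
    apply lintegral_congr
    intro z
    rw [← Real.enorm_eq_ofReal (hρ0 z)]
  -- step 2 : Hölder / Lp monotonicity
  have e2 : eLpNorm ρ 1 (volume.restrict (ball c s))
      ≤ eLpNorm ρ q (volume.restrict (ball c s)) * (volume (ball c s)) ^ (1 - 1 / p) := by
    have h := eLpNorm_le_eLpNorm_mul_rpow_measure_univ (μ := volume.restrict (ball c s))
      hq1 hρm.aestronglyMeasurable
    rwa [Measure.restrict_apply_univ, ENNReal.toReal_one,
      ENNReal.toReal_ofReal hp0.le, one_div_one] at h
  -- step 3 : eLpNorm on small ball ≤ ulNorm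
  have e3 : eLpNorm ρ q (volume.restrict (ball c s)) ≤ ulNorm q ρ := by
    refine le_trans (eLpNorm_mono_measure ρ (Measure.restrict_mono (ball_subset_ball hs1) le_rfl)) ?_
    exact le_iSup (fun x => eLpNorm ρ q (volume.restrict (ball x 1))) c
  -- step 4 : volume of ball
  have hvol : volume (ball c s) = ENNReal.ofReal (s ^ d) * volume (ball (0 : EuclideanSpace ℝ (Fin d)) 1) := by
    rw [Measure.addHaar_ball volume c hs0.le, finrank_euclideanSpace_fin]
  have hvol2 : (volume (ball c s)) ^ (1 - 1 / p) ≤ ENNReal.ofReal (Vb d * s ^ ((d:ℝ) - d / p)) := by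
    have hexp0 : 0 ≤ 1 - 1 / p := by
      have : 1 / p ≤ 1 := by
        rw [div_le_one hp0]; exact hp
      linarith
    have hexp1 : 1 - 1 / p ≤ 1 := by
      have : 0 ≤ 1 / p := by positivity
      linarith
    rw [hvol, ENNReal.mul_rpow_of_nonneg _ _ hexp0]
    have hb1 : (ENNReal.ofReal (s ^ d)) ^ (1 - 1 / p) = ENNReal.ofReal (s ^ ((d:ℝ) - d / p)) := by
      rw [ENNReal.ofReal_rpow_of_pos (by positivity)]
      congr 1
      rw [← Real.rpow_natCast s d, ← Real.rpow_mul hs0.le]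
      congr 1
      field_simp
    have hb2 : (volume (ball (0 : EuclideanSpace ℝ (Fin d)) 1)) ^ (1 - 1 / p)
        ≤ ENNReal.ofReal (Vb d) := by
      set ν := volume (ball (0 : EuclideanSpace ℝ (Fin d)) 1) with hν
      have hνfin : ν ≠ ⊤ := (measure_ball_lt_top).ne
      have hνeq : ν = ENNReal.ofReal (ν.toReal) := (ENNReal.ofReal_toReal hνfin).symm
      rw [hνeq, ENNReal.ofReal_rpow_of_nonneg ENNReal.toReal_nonneg hexp0]
      apply ENNReal.ofReal_le_ofReal
      rcases le_total (ν.toReal) 1 with h | h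
      · calc ν.toReal ^ (1 - 1/p) ≤ 1 := Real.rpow_le_one ENNReal.toReal_nonneg h hexp0
          _ ≤ Vb d := one_le_Vb d
      · calc ν.toReal ^ (1 - 1/p) ≤ ν.toReal ^ (1:ℝ) :=
            Real.rpow_le_rpow_of_exponent_le h hexp1
          _ = ν.toReal := Real.rpow_one _
          _ ≤ Vb d := le_max_left _ _
    calc (ENNReal.ofReal (s ^ d)) ^ (1 - 1/p) * (volume (ball (0 : EuclideanSpace ℝ (Fin d)) 1)) ^ (1 - 1/p)
        ≤ ENNReal.ofReal (s ^ ((d:ℝ) - d / p)) * ENNReal.ofReal (Vb d) := by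
          rw [hb1]; exact mul_le_mul_right hb2 _
      _ = ENNReal.ofReal (Vb d * s ^ ((d:ℝ) - d / p)) := by
          rw [← ENNReal.ofReal_mul (by positivity), mul_comm]
  calc ∫⁻ z in ball c s, ENNReal.ofReal (ρ z)
      ≤ eLpNorm ρ q (volume.restrict (ball c s)) * (volume (ball c s)) ^ (1 - 1 / p) := by
        rw [e1]; exact e2
    _ ≤ ulNorm q ρ * ENNReal.ofReal (Vb d * s ^ ((d:ℝ) - d / p)) := mul_le_mul' e3 hvol2
    _ ≤ (ENNReal.ofReal (Θ p) * yudNorm Θ ρ) * ENNReal.ofReal (Vb d * s ^ ((d:ℝ) - d / p)) :=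
        mul_le_mul_left (ul_le Θ hΘpos ρ hp) _
    _ = ENNReal.ofReal (Θ p * Vb d * s ^ ((d:ℝ) - d / p)) * yudNorm Θ ρ := by
        rw [mul_comm (ENNReal.ofReal (Θ p)) (yudNorm Θ ρ), mul_assoc,
          ← ENNReal.ofReal_mul (le_of_lt (hΘpos p)), mul_assoc]
        ring_nf

/-- geometric series constant -/
noncomputable def Gg (d : ℕ) : ℝ := (1 - (2:ℝ) ^ (-(1:ℝ)/((d:ℝ)+1)))⁻¹

lemma aR_lt_one (d : ℕ) : (2:ℝ) ^ (-(1:ℝ)/((d:ℝ)+1)) < 1 := by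
  apply Real.rpow_lt_one_of_one_lt_of_neg one_lt_two
  apply div_neg_of_neg_of_pos (by norm_num) (by positivity)

lemma aR_nonneg (d : ℕ) : 0 ≤ (2:ℝ) ^ (-(1:ℝ)/((d:ℝ)+1)) := Real.rpow_nonneg (by norm_num) _

lemma Gg_pos (d : ℕ) : 0 < Gg d := by
  rw [Gg]; exact inv_pos.mpr (by linarith [aR_lt_one d])

lemma key_pow {s : ℝ} (hs : 0 < s) (m : ℕ) (e : ℝ) :
    (s * (2:ℝ)⁻¹ ^ m) ^ e = s ^ e * (2:ℝ) ^ (-(m:ℝ) * e) := by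
  have h2 : (0:ℝ) < 2 := two_pos
  have e2 : (2:ℝ)⁻¹ ^ m = (2:ℝ) ^ (-(m:ℝ)) := by
    rw [inv_pow, ← Real.rpow_natCast 2 m, ← Real.rpow_neg h2.le]
  rw [e2, Real.mul_rpow hs.le (Real.rpow_nonneg h2.le _), ← Real.rpow_mul h2.le]

lemma key_pow' {s : ℝ} (hs : 0 < s) (m : ℕ) (e : ℝ) :
    (s * (2:ℝ) ^ m) ^ e = s ^ e * (2:ℝ) ^ ((m:ℝ) * e) := by
  have h2 : (0:ℝ) < 2 := two_pos
  have e2 : (2:ℝ) ^ m = (2:ℝ) ^ ((m:ℝ)) := by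
    rw [Real.rpow_natCast]
  rw [e2, Real.mul_rpow hs.le (Real.rpow_nonneg h2.le _), ← Real.rpow_mul h2.le]

lemma shell_calc {d k : ℕ} {s p : ℝ} (hd : 2 ≤ d) (hs : 0 < s) (hp : (d:ℝ)+1 ≤ p) :
    ((s * (2:ℝ)⁻¹ ^ (k+1)) ^ (d-1))⁻¹ * (s * (2:ℝ)⁻¹ ^ k) ^ ((d:ℝ) - d/p)
      ≤ 2 ^ (d-1) * s ^ (1-(d:ℝ)/p) * ((2:ℝ) ^ (-(1:ℝ)/((d:ℝ)+1)))^k := by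
  have h2 : (0:ℝ) < 2 := two_pos
  have hd0 : (0:ℝ) ≤ (d:ℝ) := Nat.cast_nonneg d
  have hp0 : (0:ℝ) < p := by linarith
  have hcast : ((d-1:ℕ):ℝ) = (d:ℝ) - 1 := by
    rw [Nat.cast_sub (by omega)]; norm_num
  have hbase : (0:ℝ) < s * (2:ℝ)⁻¹ ^ (k+1) := by positivity
  have hfrac : 1/((d:ℝ)+1) ≤ 1 - (d:ℝ)/p := by
    have h1 : (d:ℝ)/p ≤ (d:ℝ)/((d:ℝ)+1) := by
      apply div_le_div_of_nonneg_left hd0 (by positivity) hp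
    have h2' : (d:ℝ)/((d:ℝ)+1) = 1 - 1/((d:ℝ)+1) := by
      field_simp
      ring
    linarith
  calc ((s * (2:ℝ)⁻¹ ^ (k+1)) ^ (d-1))⁻¹ * (s * (2:ℝ)⁻¹ ^ k) ^ ((d:ℝ) - d/p)
      = (s * (2:ℝ)⁻¹ ^ (k+1)) ^ (-(((d-1:ℕ)):ℝ)) * (s * (2:ℝ)⁻¹ ^ k) ^ ((d:ℝ) - d/p) := by
        rw [← Real.rpow_natCast (s * (2:ℝ)⁻¹ ^ (k+1)) (d-1), ← Real.rpow_neg hbase.le]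
    _ = (s ^ (-(((d-1:ℕ)):ℝ)) * 2 ^ (-((k+1:ℕ):ℝ) * (-(((d-1:ℕ)):ℝ))))
        * (s ^ ((d:ℝ) - d/p) * 2 ^ (-(k:ℝ) * ((d:ℝ) - d/p))) := by
        rw [key_pow hs, key_pow hs]
    _ = s ^ (-(((d-1:ℕ)):ℝ) + ((d:ℝ) - d/p))
        * 2 ^ ((-((k+1:ℕ):ℝ) * (-(((d-1:ℕ)):ℝ))) + (-(k:ℝ) * ((d:ℝ) - d/p))) := by
        rw [Real.rpow_add hs, Real.rpow_add h2]; ring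
    _ = s ^ (1 - (d:ℝ)/p) * 2 ^ (((d:ℝ) - 1) - k * (1 - (d:ℝ)/p)) := by
        rw [hcast]
        push_cast
        ring_nf
    _ ≤ s ^ (1 - (d:ℝ)/p) * 2 ^ (((d:ℝ) - 1) - k * (1/((d:ℝ)+1))) := by
        apply mul_le_mul_of_nonneg_left _ (Real.rpow_nonneg hs.le _)
        apply Real.rpow_le_rpow_of_exponent_le one_le_two
        have : (k:ℝ) * (1/((d:ℝ)+1)) ≤ (k:ℝ) * (1 - (d:ℝ)/p) :=
          mul_le_mul_of_nonneg_left hfrac (Nat.cast_nonneg k)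
        linarith
    _ = 2 ^ (d-1) * s ^ (1-(d:ℝ)/p) * ((2:ℝ) ^ (-(1:ℝ)/((d:ℝ)+1)))^k := by
        rw [← Real.rpow_natCast ((2:ℝ) ^ (-(1:ℝ)/((d:ℝ)+1))) k,
          ← Real.rpow_mul h2.le, ← Real.rpow_natCast (2:ℝ) (d-1), hcast,
          show ((d:ℝ)-1) - (k:ℝ)*(1/((d:ℝ)+1)) = ((d:ℝ)-1) + (-(1:ℝ)/((d:ℝ)+1) * (k:ℝ)) by ring,
          Real.rpow_add h2]
        ring

lemma mid_calc {d k : ℕ} {s p : ℝ} (hd : 2 ≤ d) (hs : 0 < s) (hp : (d:ℝ)+1 ≤ p) :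
    (((s * (2:ℝ) ^ k) ^ d)⁻¹) * (s * (2:ℝ) ^ (k+1)) ^ ((d:ℝ) - d/p)
      ≤ 2 ^ d * s ^ (-(d:ℝ)/p) := by
  have h2 : (0:ℝ) < 2 := two_pos
  have hd0 : (0:ℝ) ≤ (d:ℝ) := Nat.cast_nonneg d
  have hp0 : (0:ℝ) < p := by linarith
  have hbase : (0:ℝ) < s * (2:ℝ) ^ k := by positivity
  have hdp0 : 0 ≤ (d:ℝ)/p := by positivity
  calc (((s * (2:ℝ) ^ k) ^ d)⁻¹) * (s * (2:ℝ) ^ (k+1)) ^ ((d:ℝ) - d/p)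
      = (s * (2:ℝ) ^ k) ^ (-((d:ℕ):ℝ)) * (s * (2:ℝ) ^ (k+1)) ^ ((d:ℝ) - d/p) := by
        rw [← Real.rpow_natCast (s * (2:ℝ) ^ k) d, ← Real.rpow_neg hbase.le]
    _ = (s ^ (-((d:ℕ):ℝ)) * 2 ^ ((k:ℝ) * (-((d:ℕ):ℝ))))
        * (s ^ ((d:ℝ) - d/p) * 2 ^ (((k+1:ℕ):ℝ) * ((d:ℝ) - d/p))) := by
        rw [key_pow' hs, key_pow' hs]
    _ = s ^ (-((d:ℕ):ℝ) + ((d:ℝ) - d/p))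
        * 2 ^ (((k:ℝ) * (-((d:ℕ):ℝ))) + (((k+1:ℕ):ℝ) * ((d:ℝ) - d/p))) := by
        rw [Real.rpow_add hs, Real.rpow_add h2]; ring
    _ = s ^ (-(d:ℝ)/p) * 2 ^ ((d:ℝ) - ((k:ℝ)+1) * ((d:ℝ)/p)) := by
        push_cast
        ring_nf
    _ ≤ s ^ (-(d:ℝ)/p) * 2 ^ ((d:ℝ)) := by
        apply mul_le_mul_of_nonneg_left _ (Real.rpow_nonneg hs.le _)
        apply Real.rpow_le_rpow_of_exponent_le one_le_two
        nlinarith [Nat.cast_nonneg (α := ℝ) k]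
    _ = 2 ^ d * s ^ (-(d:ℝ)/p) := by
        rw [Real.rpow_natCast]; ring

lemma nearInt {d : ℕ} (hd : 2 ≤ d) (Θ : ℝ → ℝ) (hΘpos : ∀ q, 0 < Θ q)
    (ρ : EuclideanSpace ℝ (Fin d) → ℝ) (hρm : Measurable ρ) (hρ0 : ∀ z, 0 ≤ ρ z)
    {c : EuclideanSpace ℝ (Fin d)} {s p : ℝ} (hs0 : 0 < s) (hs1 : s ≤ 1)
    (hp : (d:ℝ)+1 ≤ p) :
    ∫⁻ z in ball c s, ENNReal.ofReal ((‖c - z‖ ^ (d-1))⁻¹ * ρ z)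
      ≤ ENNReal.ofReal (2^(d-1) * Gg d * Θ p * Vb d * s ^ (1-(d:ℝ)/p)) * yudNorm Θ ρ := by
  classical
  haveI : Nonempty (Fin d) := ⟨⟨0, by omega⟩⟩
  haveI : Nontrivial (EuclideanSpace ℝ (Fin d)) := inferInstance
  have hp1 : (1:ℝ) ≤ p := by
    have : (0:ℝ) ≤ (d:ℝ) := Nat.cast_nonneg d
    linarith
  set Y := yudNorm Θ ρ with hY
  set f : EuclideanSpace ℝ (Fin d) → ℝ≥0∞ :=
    fun z => ENNReal.ofReal ((‖c - z‖ ^ (d-1))⁻¹ * ρ z) with hf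
  set S : ℕ → Set (EuclideanSpace ℝ (Fin d)) :=
    fun k => {z | s * (2:ℝ)⁻¹^(k+1) ≤ dist z c} ∩ ball c (s * (2:ℝ)⁻¹^k) with hS
  have hrk : ∀ k : ℕ, 0 < s * (2:ℝ)⁻¹^k := fun k => by positivity
  have hrk1 : ∀ k : ℕ, s * (2:ℝ)⁻¹^k ≤ 1 := by
    intro k
    have h1 : (2:ℝ)⁻¹^k ≤ 1 := pow_le_one₀ (by norm_num) (by norm_num)
    nlinarith
  -- coverage
  have hcover : ball c s ⊆ {c} ∪ ⋃ k, S k := by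
    intro z hz
    rcases eq_or_ne z c with rfl | hzc
    · exact Or.inl rfl
    right
    have hD0 : 0 < dist z c := dist_pos.mpr hzc
    have hDs : dist z c < s := mem_ball.mp hz
    have hex : ∃ n : ℕ, s * (2:ℝ)⁻¹^(n+1) ≤ dist z c := by
      obtain ⟨n, hn⟩ := exists_pow_lt_of_lt_one (div_pos hD0 hs0) (by norm_num : (2:ℝ)⁻¹ < 1)
      rw [lt_div_iff₀ hs0] at hn
      refine ⟨n, ?_⟩
      have h2 : (2:ℝ)⁻¹^(n+1) ≤ (2:ℝ)⁻¹^n :=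
        pow_le_pow_of_le_one (by norm_num) (by norm_num) (by omega)
      nlinarith
    refine mem_iUnion.mpr ⟨Nat.find hex, Nat.find_spec hex, ?_⟩
    rw [mem_ball]
    rcases Nat.eq_zero_or_pos (Nat.find hex) with h0 | h0
    · rw [h0]; simpa using hDs
    · have hmin := Nat.find_min hex (m := Nat.find hex - 1) (by omega)
      rw [not_le, show Nat.find hex - 1 + 1 = Nat.find hex by omega] at hmin
      exact hmin
  -- per-shell bound
  have hterm : ∀ k : ℕ, ∫⁻ z in S k, f z
      ≤ ENNReal.ofReal (2^(d-1) * Θ p * Vb d * s ^ (1-(d:ℝ)/p))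
        * (ENNReal.ofReal ((2:ℝ) ^ (-(1:ℝ)/((d:ℝ)+1))))^k * Y := by
    intro k
    set M : ℝ := ((s * (2:ℝ)⁻¹^(k+1)) ^ (d-1))⁻¹ with hM
    have hM0 : 0 ≤ M := by rw [hM]; positivity
    have hbd : ∀ z ∈ S k, f z ≤ ENNReal.ofReal M * ENNReal.ofReal (ρ z) := by
      intro z hz
      rw [hf, ← ENNReal.ofReal_mul hM0]
      apply ENNReal.ofReal_le_ofReal
      apply mul_le_mul_of_nonneg_right _ (hρ0 z)
      have hzd : s * (2:ℝ)⁻¹^(k+1) ≤ ‖c - z‖ := by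
        rw [show ‖c - z‖ = dist z c by rw [dist_comm, dist_eq_norm]]
        exact hz.1
      exact inv_anti₀ (by positivity) (pow_le_pow_left₀ (by positivity) hzd _)
    calc ∫⁻ z in S k, f z
        ≤ ∫⁻ z in S k, ENNReal.ofReal M * ENNReal.ofReal (ρ z) := by
          apply setLIntegral_mono (by exact (hρm.ennreal_ofReal).const_mul _) hbd
      _ = ENNReal.ofReal M * ∫⁻ z in S k, ENNReal.ofReal (ρ z) :=
          lintegral_const_mul' _ _ ENNReal.ofReal_ne_top
      _ ≤ ENNReal.ofReal M * ∫⁻ z in ball c (s * (2:ℝ)⁻¹^k), ENNReal.ofReal (ρ z) :=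
          mul_le_mul_right (lintegral_mono_set inter_subset_right) _
      _ ≤ ENNReal.ofReal M *
          (ENNReal.ofReal (Θ p * Vb d * (s * (2:ℝ)⁻¹^k) ^ ((d:ℝ) - d / p)) * Y) :=
          mul_le_mul_right (mass_ball hd Θ hΘpos ρ hρm (hrk k) (hrk1 k) hp1 hρ0) _
      _ = ENNReal.ofReal (M * (Θ p * Vb d * (s * (2:ℝ)⁻¹^k) ^ ((d:ℝ) - d / p))) * Y := by
          rw [← mul_assoc, ← ENNReal.ofReal_mul hM0]
      _ ≤ ENNReal.ofReal (2^(d-1) * Θ p * Vb d * s ^ (1-(d:ℝ)/p)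
            * ((2:ℝ) ^ (-(1:ℝ)/((d:ℝ)+1)))^k) * Y := by
          apply mul_le_mul_left
          apply ENNReal.ofReal_le_ofReal
          have hsc := shell_calc (k := k) hd hs0 hp
          have hTV : 0 ≤ Θ p * Vb d := by
            have := (hΘpos p).le
            have := one_le_Vb d
            positivity
          calc M * (Θ p * Vb d * (s * (2:ℝ)⁻¹^k) ^ ((d:ℝ) - d / p))
              = (Θ p * Vb d) * (M * (s * (2:ℝ)⁻¹^k) ^ ((d:ℝ) - d / p)) := by ring
            _ ≤ (Θ p * Vb d) * (2 ^ (d-1) * s ^ (1-(d:ℝ)/p)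
                  * ((2:ℝ) ^ (-(1:ℝ)/((d:ℝ)+1)))^k) :=
                mul_le_mul_of_nonneg_left hsc hTV
            _ = 2^(d-1) * Θ p * Vb d * s ^ (1-(d:ℝ)/p)
                  * ((2:ℝ) ^ (-(1:ℝ)/((d:ℝ)+1)))^k := by ring
      _ = ENNReal.ofReal (2^(d-1) * Θ p * Vb d * s ^ (1-(d:ℝ)/p))
            * (ENNReal.ofReal ((2:ℝ) ^ (-(1:ℝ)/((d:ℝ)+1))))^k * Y := by
          have hC0 : 0 ≤ 2^(d-1) * Θ p * Vb d * s ^ (1-(d:ℝ)/p) :=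
            mul_nonneg (mul_nonneg (mul_nonneg (by positivity) (hΘpos p).le)
              (by linarith [one_le_Vb d])) (Real.rpow_nonneg hs0.le _)
          rw [← ENNReal.ofReal_pow (aR_nonneg d), ← ENNReal.ofReal_mul hC0]
  -- sum up
  have hsum : ∑' k : ℕ, (ENNReal.ofReal ((2:ℝ) ^ (-(1:ℝ)/((d:ℝ)+1))))^k
      = ENNReal.ofReal (Gg d) := by
    rw [ENNReal.tsum_geometric, ← ENNReal.ofReal_one,
      ← ENNReal.ofReal_sub _ (aR_nonneg d), Gg,
      ENNReal.ofReal_inv_of_pos (by linarith [aR_lt_one d])]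
  calc ∫⁻ z in ball c s, f z
      ≤ ∫⁻ z in {c} ∪ ⋃ k, S k, f z := lintegral_mono_set hcover
    _ ≤ (∫⁻ z in {c}, f z) + ∫⁻ z in ⋃ k, S k, f z := lintegral_union_le _ _ _
    _ ≤ 0 + ∑' k : ℕ, ∫⁻ z in S k, f z := by
        apply add_le_add
        · rw [setLIntegral_measure_zero _ _ (measure_singleton c)]
        · exact lintegral_iUnion_le _ _
    _ ≤ ∑' k : ℕ, ENNReal.ofReal (2^(d-1) * Θ p * Vb d * s ^ (1-(d:ℝ)/p))
          * (ENNReal.ofReal ((2:ℝ) ^ (-(1:ℝ)/((d:ℝ)+1))))^k * Y := by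
        rw [zero_add]
        exact ENNReal.tsum_le_tsum hterm
    _ = ∑' k : ℕ, (ENNReal.ofReal (2^(d-1) * Θ p * Vb d * s ^ (1-(d:ℝ)/p)) * Y)
          * (ENNReal.ofReal ((2:ℝ) ^ (-(1:ℝ)/((d:ℝ)+1))))^k :=
        tsum_congr (fun k => by ring)
    _ = ENNReal.ofReal (2^(d-1) * Θ p * Vb d * s ^ (1-(d:ℝ)/p)) * Y
          * ∑' k : ℕ, (ENNReal.ofReal ((2:ℝ) ^ (-(1:ℝ)/((d:ℝ)+1))))^k :=
        ENNReal.tsum_mul_left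
    _ = ENNReal.ofReal (2^(d-1) * Gg d * Θ p * Vb d * s ^ (1-(d:ℝ)/p)) * Y := by
        have hC0 : 0 ≤ 2^(d-1) * Θ p * Vb d * s ^ (1-(d:ℝ)/p) :=
          mul_nonneg (mul_nonneg (mul_nonneg (by positivity) (hΘpos p).le)
            (by linarith [one_le_Vb d])) (Real.rpow_nonneg hs0.le _)
        rw [hsum, mul_right_comm, ← ENNReal.ofReal_mul hC0]
        congr 2
        ring

lemma midInt {d : ℕ} (hd : 2 ≤ d) (Θ : ℝ → ℝ) (hΘpos : ∀ q, 0 < Θ q)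
    (ρ : EuclideanSpace ℝ (Fin d) → ℝ) (hρm : Measurable ρ) (hρ0 : ∀ z, 0 ≤ ρ z)
    {c : EuclideanSpace ℝ (Fin d)} {s p : ℝ} {N : ℕ} (hs0 : 0 < s) (hs1 : s ≤ 1)
    (hp : (d:ℝ)+1 ≤ p) (hN1 : 1 ≤ N) (hN : 1 ≤ s * 2^N) :
    ∫⁻ z in ball c 1 \ ball c s, ENNReal.ofReal ((‖c - z‖ ^ d)⁻¹ * ρ z)
      ≤ (N : ℝ≥0∞) * ENNReal.ofReal (2^d * Θ p * Vb d * s ^ (-(d:ℝ)/p)) * yudNorm Θ ρ := by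
  classical
  have hp1 : (1:ℝ) ≤ p := by
    have : (0:ℝ) ≤ (d:ℝ) := Nat.cast_nonneg d
    linarith
  have hp0 : (0:ℝ) < p := by linarith
  set Y := yudNorm Θ ρ with hY
  set f : EuclideanSpace ℝ (Fin d) → ℝ≥0∞ :=
    fun z => ENNReal.ofReal ((‖c - z‖ ^ d)⁻¹ * ρ z) with hf
  set S : ℕ → Set (EuclideanSpace ℝ (Fin d)) :=
    fun k => {z | s * (2:ℝ)^k ≤ dist z c} ∩ ball c (min (s * (2:ℝ)^(k+1)) 1) with hS
  set B : ℝ≥0∞ := ENNReal.ofReal (2^d * Θ p * Vb d * s ^ (-(d:ℝ)/p)) * Y with hB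
  -- coverage
  have hcover : ball c 1 \ ball c s ⊆ ⋃ (i : Fin N), S i := by
    intro z hz
    obtain ⟨hz1, hz2⟩ := hz
    have hD1 : dist z c < 1 := mem_ball.mp hz1
    have hDs : s ≤ dist z c := by
      by_contra h
      exact hz2 (mem_ball.mpr (lt_of_not_ge h))
    have hex : ∃ k : ℕ, dist z c < s * (2:ℝ)^(k+1) := by
      refine ⟨N - 1, ?_⟩
      rw [show N - 1 + 1 = N by omega]
      linarith
    have hfind : Nat.find hex < N := by
      have h1 : Nat.find hex ≤ N - 1 := by
        apply Nat.find_le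
        rw [show N - 1 + 1 = N by omega]
        linarith
      omega
    refine mem_iUnion.mpr ⟨⟨Nat.find hex, hfind⟩, ?_, mem_ball.mpr ?_⟩
    · rcases Nat.eq_zero_or_pos (Nat.find hex) with h0 | h0
      · simp only [h0, pow_zero, mul_one]
        exact hDs
      · have hmin := Nat.find_min hex (m := Nat.find hex - 1) (by omega)
        rw [not_lt, show Nat.find hex - 1 + 1 = Nat.find hex by omega] at hmin
        exact hmin
    · exact lt_min (Nat.find_spec hex) hD1
  -- per-shell bound
  have hterm : ∀ k : ℕ, ∫⁻ z in S k, f z ≤ B := by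
    intro k
    set m : ℝ := min (s * (2:ℝ)^(k+1)) 1 with hm
    have hm0 : 0 < m := lt_min (by positivity) one_pos
    have hm1 : m ≤ 1 := min_le_right _ _
    set M : ℝ := ((s * (2:ℝ)^k) ^ d)⁻¹ with hM
    have hM0 : 0 ≤ M := by rw [hM]; positivity
    have hbd : ∀ z ∈ S k, f z ≤ ENNReal.ofReal M * ENNReal.ofReal (ρ z) := by
      intro z hz
      rw [hf, ← ENNReal.ofReal_mul hM0]
      apply ENNReal.ofReal_le_ofReal
      apply mul_le_mul_of_nonneg_right _ (hρ0 z)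
      have hzd : s * (2:ℝ)^k ≤ ‖c - z‖ := by
        rw [show ‖c - z‖ = dist z c by rw [dist_comm, dist_eq_norm]]
        exact hz.1
      exact inv_anti₀ (by positivity) (pow_le_pow_left₀ (by positivity) hzd _)
    have hexp0 : (0:ℝ) ≤ (d:ℝ) - (d:ℝ)/p := by
      have h1 : (d:ℝ)/p ≤ (d:ℝ) := by
        apply div_le_self (Nat.cast_nonneg d) hp1
      linarith
    calc ∫⁻ z in S k, f z
        ≤ ∫⁻ z in S k, ENNReal.ofReal M * ENNReal.ofReal (ρ z) := by
          apply setLIntegral_mono (by exact (hρm.ennreal_ofReal).const_mul _) hbd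
      _ = ENNReal.ofReal M * ∫⁻ z in S k, ENNReal.ofReal (ρ z) :=
          lintegral_const_mul' _ _ ENNReal.ofReal_ne_top
      _ ≤ ENNReal.ofReal M * ∫⁻ z in ball c m, ENNReal.ofReal (ρ z) :=
          mul_le_mul_right (lintegral_mono_set inter_subset_right) _
      _ ≤ ENNReal.ofReal M * (ENNReal.ofReal (Θ p * Vb d * m ^ ((d:ℝ) - d / p)) * Y) :=
          mul_le_mul_right (mass_ball hd Θ hΘpos ρ hρm hm0 hm1 hp1 hρ0) _
      _ = ENNReal.ofReal (M * (Θ p * Vb d * m ^ ((d:ℝ) - d / p))) * Y := by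
          rw [← mul_assoc, ← ENNReal.ofReal_mul hM0]
      _ ≤ B := by
          rw [hB]
          apply mul_le_mul_left
          apply ENNReal.ofReal_le_ofReal
          have hTV : 0 ≤ Θ p * Vb d := by
            have h1 := (hΘpos p).le
            have h2 := one_le_Vb d
            nlinarith
          have hmle : m ^ ((d:ℝ) - d / p) ≤ (s * (2:ℝ)^(k+1)) ^ ((d:ℝ) - d / p) :=
            Real.rpow_le_rpow hm0.le (min_le_left _ _) hexp0
          have hmc := mid_calc (k := k) hd hs0 hp
          calc M * (Θ p * Vb d * m ^ ((d:ℝ) - d / p))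
              ≤ M * (Θ p * Vb d * (s * (2:ℝ)^(k+1)) ^ ((d:ℝ) - d / p)) := by
                apply mul_le_mul_of_nonneg_left _ hM0
                exact mul_le_mul_of_nonneg_left hmle hTV
            _ = (Θ p * Vb d) * (M * (s * (2:ℝ)^(k+1)) ^ ((d:ℝ) - d / p)) := by ring
            _ ≤ (Θ p * Vb d) * (2^d * s ^ (-(d:ℝ)/p)) :=
                mul_le_mul_of_nonneg_left hmc hTV
            _ = 2^d * Θ p * Vb d * s ^ (-(d:ℝ)/p) := by ring
  calc ∫⁻ z in ball c 1 \ ball c s, f z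
      ≤ ∫⁻ z in ⋃ (i : Fin N), S i, f z := lintegral_mono_set hcover
    _ ≤ ∑' (i : Fin N), ∫⁻ z in S i, f z := lintegral_iUnion_le _ _
    _ = ∑ i : Fin N, ∫⁻ z in S i, f z := tsum_fintype _
    _ ≤ ∑ _i : Fin N, B := Finset.sum_le_sum (fun i _ => hterm i)
    _ = (N : ℝ≥0∞) * B := by
        rw [Finset.sum_const, Finset.card_univ, Fintype.card_fin, nsmul_eq_mul]
    _ = (N : ℝ≥0∞) * ENNReal.ofReal (2^d * Θ p * Vb d * s ^ (-(d:ℝ)/p)) * Y := by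
        rw [hB, mul_assoc]
        ring

lemma large_bound {d : ℕ} (hd : 2 ≤ d) (Θ : ℝ → ℝ) (hΘpos : ∀ q, 0 < Θ q)
    (K : EuclideanSpace ℝ (Fin d) → EuclideanSpace ℝ (Fin d))
    (hK : ∀ z, K z = (‖z‖ ^ d)⁻¹ • z)
    (ρ : EuclideanSpace ℝ (Fin d) → ℝ) (hρm : Measurable ρ) (hρ0 : ∀ z, 0 ≤ ρ z)
    (c : EuclideanSpace ℝ (Fin d)) :
    ∫⁻ z, ENNReal.ofReal (‖K (c - z)‖ * ρ z)
      ≤ ENNReal.ofReal (2^(d-1) * Gg d * Θ ((d:ℝ)+1) * Vb d) * yudNorm Θ ρ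
        + ∫⁻ z, ENNReal.ofReal (ρ z) := by
  have hnormK : ∀ w : EuclideanSpace ℝ (Fin d), ‖K w‖ = (‖w‖ ^ (d-1))⁻¹ := by
    intro w; rw [hK]; exact normK hd w
  have hmb : MeasurableSet (ball c 1) := measurableSet_ball
  rw [← lintegral_add_compl (fun z => ENNReal.ofReal (‖K (c - z)‖ * ρ z)) hmb]
  apply add_le_add
  · -- inside the unit ball
    have : ∀ z, ENNReal.ofReal (‖K (c - z)‖ * ρ z)
        = ENNReal.ofReal ((‖c - z‖ ^ (d-1))⁻¹ * ρ z) := by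
      intro z; rw [hnormK]
    simp_rw [this]
    have h := nearInt hd Θ hΘpos ρ hρm hρ0 (c := c) (s := 1) (p := (d:ℝ)+1)
      one_pos le_rfl le_rfl
    rwa [Real.one_rpow, mul_one] at h
  · -- outside
    refine le_trans (setLIntegral_mono (hρm.ennreal_ofReal) ?_) (setLIntegral_le_lintegral _ _)
    intro z hz
    apply ENNReal.ofReal_le_ofReal
    have h1 : (1:ℝ) ≤ ‖c - z‖ := by
      rw [show ‖c - z‖ = dist z c by rw [dist_comm, dist_eq_norm]]
      simpa [not_lt] using hz
    have h2 : ((‖c - z‖ ^ (d-1))⁻¹ : ℝ) ≤ 1 := by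
      rw [inv_le_one_iff₀]
      right
      exact one_le_pow₀ h1
    rw [hnormK]
    nlinarith [hρ0 z, mul_le_mul_of_nonneg_right h2 (hρ0 z)]

set_option maxHeartbeats 1000000 in
lemma small_bound {d : ℕ} (hd : 2 ≤ d) (Θ : ℝ → ℝ) (hΘmono : Monotone Θ) (hΘpos : ∀ q, 0 < Θ q)
    (K : EuclideanSpace ℝ (Fin d) → EuclideanSpace ℝ (Fin d))
    (hK : ∀ z, K z = (‖z‖ ^ d)⁻¹ • z)
    (ρ : EuclideanSpace ℝ (Fin d) → ℝ) (hρm : Measurable ρ) (hρ0 : ∀ z, 0 ≤ ρ z)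
    (x y : EuclideanSpace ℝ (Fin d))
    (hr0 : 0 < ‖x - y‖) (hrlt : ‖x - y‖ < Real.exp (-((d:ℝ)+1))) :
    ∫⁻ z, ENNReal.ofReal (‖K (x - z) - K (y - z)‖ * ρ z)
      ≤ ENNReal.ofReal ((5*2^(d-1)*Gg d*Vb d*Real.exp d + 3*((d:ℝ)+1)*4^d*Vb d*Real.exp d)
          * (‖x - y‖ * (-Real.log ‖x - y‖) * Θ (-Real.log ‖x - y‖))) * yudNorm Θ ρ
        + ENNReal.ofReal (((d:ℝ)+1) * 2^d * ‖x - y‖) * ∫⁻ z, ENNReal.ofReal (ρ z) := by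
  classical
  set r : ℝ := ‖x - y‖ with hr
  set p : ℝ := -Real.log r with hpdef
  set Y := yudNorm Θ ρ with hY
  set L := ∫⁻ z, ENNReal.ofReal (ρ z) with hL
  have hd0 : (0:ℝ) ≤ (d:ℝ) := Nat.cast_nonneg d
  have hd2 : (2:ℝ) ≤ (d:ℝ) := by exact_mod_cast hd
  -- basic numeric facts
  have hlog : Real.log r < -((d:ℝ)+1) := by
    have h := Real.log_lt_log hr0 hrlt
    rwa [Real.log_exp] at h
  have hp : (d:ℝ)+1 ≤ p := by rw [hpdef]; linarith
  have hp1 : (1:ℝ) ≤ p := by linarith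
  have hp0 : (0:ℝ) < p := by linarith
  have hlogr : Real.log r = -p := by rw [hpdef]; ring
  have hr14 : r < 1/4 := by
    have h1 : Real.exp (-((d:ℝ)+1)) ≤ Real.exp (-3) := by
      apply Real.exp_le_exp.mpr; linarith
    have h2 : Real.exp (-3:ℝ) < 1/4 := by
      rw [Real.exp_neg]
      rw [inv_lt_iff_one_lt_mul₀ (Real.exp_pos 3)]
      nlinarith [Real.add_one_lt_exp (by norm_num : (3:ℝ) ≠ 0)]
    linarith
  have h2r1 : 2*r ≤ 1 := by linarith
  have h3r1 : 3*r ≤ 1 := by linarith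
  have h2r0 : 0 < 2*r := by linarith
  have h3r0 : 0 < 3*r := by linarith
  -- rpow identities
  have hrpow : ∀ e : ℝ, r ^ e = Real.exp ((-p) * e) := by
    intro e
    rw [Real.rpow_def_of_pos hr0, hlogr]
  have he1 : r ^ (-(d:ℝ)/p) = Real.exp d := by
    rw [hrpow]; congr 1; field_simp
  have hee0 : 0 ≤ 1 - (d:ℝ)/p := by
    have h1 : (d:ℝ)/p ≤ (d:ℝ)/((d:ℝ)+1) :=
      div_le_div_of_nonneg_left hd0 (by positivity) hp
    have h2 : (d:ℝ)/((d:ℝ)+1) < 1 := by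
      rw [div_lt_one (by positivity)]; linarith
    linarith
  have hee1 : 1 - (d:ℝ)/p ≤ 1 := by
    have : 0 ≤ (d:ℝ)/p := by positivity
    linarith
  have he2 : r ^ (1 - (d:ℝ)/p) = r * Real.exp d := by
    rw [show 1 - (d:ℝ)/p = 1 + (-(d:ℝ)/p) by ring, Real.rpow_add hr0, Real.rpow_one, he1]
  have hu : ∀ u : ℝ, 1 ≤ u → (u*r) ^ (1 - (d:ℝ)/p) ≤ u * (r * Real.exp d) := by
    intro u hu1
    rw [Real.mul_rpow (by linarith) hr0.le, he2]
    have h1 : u ^ (1 - (d:ℝ)/p) ≤ u := by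
      calc u ^ (1 - (d:ℝ)/p) ≤ u ^ (1:ℝ) :=
          Real.rpow_le_rpow_of_exponent_le hu1 hee1
        _ = u := Real.rpow_one u
    have h2 : (0:ℝ) ≤ r * Real.exp d := by positivity
    nlinarith [Real.rpow_nonneg (by linarith : (0:ℝ) ≤ u) (1 - (d:ℝ)/p)]
  have h2rneg : (2*r) ^ (-(d:ℝ)/p) ≤ Real.exp d := by
    rw [← he1]
    apply Real.rpow_le_rpow_of_nonpos hr0 (by linarith)
    apply div_nonpos_of_nonpos_of_nonneg (by linarith) hp0.le
  -- the number of shells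
  set N : ℕ := ⌈2*p⌉₊ with hN
  have hN1 : 1 ≤ N := by
    rw [hN]
    exact Nat.one_le_ceil_iff.mpr (by linarith)
  have hNle : (N:ℝ) ≤ 3*p := by
    have h1 : (⌈2*p⌉₊:ℝ) < 2*p + 1 := Nat.ceil_lt_add_one (by linarith)
    rw [hN]; linarith
  have hNr : 1 ≤ (2*r) * 2^N := by
    have hexpr : Real.exp p * r = 1 := by
      rw [← Real.exp_log hr0, hlogr, ← Real.exp_add]
      simp
    have h2 : Real.exp p ≤ (2:ℝ)^(N:ℕ) := by
      calc Real.exp p ≤ Real.exp ((2*p) * Real.log 2) := by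
            apply Real.exp_le_exp.mpr
            nlinarith [Real.log_two_gt_d9]
        _ = (2:ℝ) ^ (2*p) := by
            rw [Real.rpow_def_of_pos two_pos]; ring_nf
        _ ≤ (2:ℝ) ^ ((N:ℕ):ℝ) := by
            apply Real.rpow_le_rpow_of_exponent_le one_le_two
            rw [hN]; exact Nat.le_ceil _
        _ = (2:ℝ)^(N:ℕ) := Real.rpow_natCast 2 N
    nlinarith [hr0]
  -- kernel bounds
  have hnormK : ∀ w : EuclideanSpace ℝ (Fin d), ‖K w‖ = (‖w‖ ^ (d-1))⁻¹ := by
    intro w; rw [hK]; exact normK hd w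
  have hKd : ∀ (a b : EuclideanSpace ℝ (Fin d)) (t : ℝ), 0 < t → t ≤ ‖a‖ → t ≤ ‖b‖ →
      ‖K a - K b‖ ≤ ((d:ℝ) + 1) * ‖a - b‖ / t ^ d := by
    intro a b t ht ha hb
    rw [hK, hK]
    exact Kdiff (by omega) ht ha hb
  -- region split
  set g : EuclideanSpace ℝ (Fin d) → ℝ≥0∞ :=
    fun z => ENNReal.ofReal (‖K (x - z) - K (y - z)‖ * ρ z) with hg
  set A1 := ball x (2*r) with hA1
  set A2 := ball x 1 \ ball x (2*r) with hA2
  set A3 := (ball x 1)ᶜ with hA3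
  have hsub : (univ : Set (EuclideanSpace ℝ (Fin d))) ⊆ (A1 ∪ A2) ∪ A3 := by
    intro z _
    by_cases h1 : z ∈ ball x (2*r)
    · exact Or.inl (Or.inl h1)
    by_cases h2 : z ∈ ball x 1
    · exact Or.inl (Or.inr ⟨h2, h1⟩)
    · exact Or.inr h2
  have hstep : ∫⁻ z, g z ≤ ((∫⁻ z in A1, g z) + (∫⁻ z in A2, g z)) + ∫⁻ z in A3, g z := by
    calc ∫⁻ z, g z = ∫⁻ z in univ, g z := (setLIntegral_univ g).symm
      _ ≤ ∫⁻ z in (A1 ∪ A2) ∪ A3, g z := lintegral_mono_set hsub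
      _ ≤ (∫⁻ z in A1 ∪ A2, g z) + ∫⁻ z in A3, g z := lintegral_union_le _ _ _
      _ ≤ ((∫⁻ z in A1, g z) + (∫⁻ z in A2, g z)) + ∫⁻ z in A3, g z :=
          add_le_add_left (lintegral_union_le _ _ _) _
  -- near bound
  have hnear : ∫⁻ z in A1, g z
      ≤ ENNReal.ofReal (2^(d-1) * Gg d * Θ p * Vb d * (2*r) ^ (1-(d:ℝ)/p)) * Y
        + ENNReal.ofReal (2^(d-1) * Gg d * Θ p * Vb d * (3*r) ^ (1-(d:ℝ)/p)) * Y := by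
    have hpt : ∀ z, g z ≤ ENNReal.ofReal ((‖x - z‖ ^ (d-1))⁻¹ * ρ z)
        + ENNReal.ofReal ((‖y - z‖ ^ (d-1))⁻¹ * ρ z) := by
      intro z
      refine le_trans (ENNReal.ofReal_le_ofReal ?_) ENNReal.ofReal_add_le
      calc ‖K (x - z) - K (y - z)‖ * ρ z
          ≤ (‖K (x - z)‖ + ‖K (y - z)‖) * ρ z :=
            mul_le_mul_of_nonneg_right (norm_sub_le _ _) (hρ0 z)
        _ = (‖x - z‖ ^ (d-1))⁻¹ * ρ z + (‖y - z‖ ^ (d-1))⁻¹ * ρ z := by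
            rw [hnormK, hnormK]; ring
    have hmeas1 : Measurable fun z : EuclideanSpace ℝ (Fin d) =>
        ENNReal.ofReal ((‖x - z‖ ^ (d-1))⁻¹ * ρ z) := by
      apply Measurable.ennreal_ofReal
      exact (((measurable_const.sub measurable_id).norm.pow_const _).inv).mul hρm
    have hmeas2 : Measurable fun z : EuclideanSpace ℝ (Fin d) =>
        ENNReal.ofReal ((‖y - z‖ ^ (d-1))⁻¹ * ρ z) := by
      apply Measurable.ennreal_ofReal
      exact (((measurable_const.sub measurable_id).norm.pow_const _).inv).mul hρm
    have hincl : A1 ⊆ ball y (3*r) := by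
      intro z hz
      rw [hA1, mem_ball] at hz
      rw [mem_ball]
      calc dist z y ≤ dist z x + dist x y := dist_triangle _ _ _
        _ < 2*r + r := by
            apply add_lt_add_of_lt_of_le hz
            rw [dist_eq_norm]
        _ = 3*r := by ring
    calc ∫⁻ z in A1, g z
        ≤ ∫⁻ z in A1, (ENNReal.ofReal ((‖x - z‖ ^ (d-1))⁻¹ * ρ z)
            + ENNReal.ofReal ((‖y - z‖ ^ (d-1))⁻¹ * ρ z)) :=
          setLIntegral_mono (hmeas1.add hmeas2) (fun z _ => hpt z)
      _ = (∫⁻ z in A1, ENNReal.ofReal ((‖x - z‖ ^ (d-1))⁻¹ * ρ z))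
            + ∫⁻ z in A1, ENNReal.ofReal ((‖y - z‖ ^ (d-1))⁻¹ * ρ z) :=
          lintegral_add_left hmeas1 _
      _ ≤ ENNReal.ofReal (2^(d-1) * Gg d * Θ p * Vb d * (2*r) ^ (1-(d:ℝ)/p)) * Y
            + ENNReal.ofReal (2^(d-1) * Gg d * Θ p * Vb d * (3*r) ^ (1-(d:ℝ)/p)) * Y := by
          apply add_le_add
          · exact nearInt hd Θ hΘpos ρ hρm hρ0 h2r0 h2r1 hp
          · refine le_trans (lintegral_mono_set hincl) ?_
            exact nearInt hd Θ hΘpos ρ hρm hρ0 h3r0 h3r1 hp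
  -- mid bound
  have hmid : ∫⁻ z in A2, g z
      ≤ ENNReal.ofReal (((d:ℝ)+1) * 2^d * r)
        * ((N : ℝ≥0∞) * ENNReal.ofReal (2^d * Θ p * Vb d * (2*r) ^ (-(d:ℝ)/p)) * Y) := by
    have hpt : ∀ z ∈ A2, g z ≤ ENNReal.ofReal (((d:ℝ)+1) * 2^d * r)
        * ENNReal.ofReal ((‖x - z‖ ^ d)⁻¹ * ρ z) := by
      intro z hz
      obtain ⟨hz1, hz2⟩ := hz
      have hA : 2*r ≤ ‖x - z‖ := by
        rw [show ‖x - z‖ = dist z x by rw [dist_comm, dist_eq_norm]]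
        simpa [not_lt] using hz2
      have hA0 : 0 < ‖x - z‖ := by linarith
      have ht : 0 < ‖x - z‖/2 := by linarith
      have hb : ‖x - z‖/2 ≤ ‖y - z‖ := by
        have h1 : ‖x - z‖ - ‖y - z‖ ≤ ‖(x - z) - (y - z)‖ := norm_sub_norm_le _ _
        have h2 : (x - z) - (y - z) = x - y := by abel
        rw [h2] at h1
        rw [← hr] at h1
        linarith
      have hKb := hKd (x - z) (y - z) (‖x - z‖/2) ht (by linarith) hb
      have hab : (x - z) - (y - z) = x - y := by abel
      rw [hab, ← hr] at hKb
      have heq : ((d:ℝ)+1) * r / (‖x - z‖/2)^d = ((d:ℝ)+1) * 2^d * r * (‖x - z‖^d)⁻¹ := by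
        rw [div_pow]
        field_simp
      rw [heq] at hKb
      rw [hg, ← ENNReal.ofReal_mul (by positivity)]
      apply ENNReal.ofReal_le_ofReal
      calc ‖K (x - z) - K (y - z)‖ * ρ z
          ≤ (((d:ℝ)+1) * 2^d * r * (‖x - z‖^d)⁻¹) * ρ z :=
            mul_le_mul_of_nonneg_right hKb (hρ0 z)
        _ = ((d:ℝ)+1) * 2^d * r * ((‖x - z‖^d)⁻¹ * ρ z) := by ring
    have hmeas : Measurable fun z : EuclideanSpace ℝ (Fin d) =>
        ENNReal.ofReal ((‖x - z‖ ^ d)⁻¹ * ρ z) := by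
      apply Measurable.ennreal_ofReal
      exact (((measurable_const.sub measurable_id).norm.pow_const _).inv).mul hρm
    calc ∫⁻ z in A2, g z
        ≤ ∫⁻ z in A2, ENNReal.ofReal (((d:ℝ)+1) * 2^d * r)
            * ENNReal.ofReal ((‖x - z‖ ^ d)⁻¹ * ρ z) :=
          setLIntegral_mono (hmeas.const_mul _) hpt
      _ = ENNReal.ofReal (((d:ℝ)+1) * 2^d * r)
            * ∫⁻ z in A2, ENNReal.ofReal ((‖x - z‖ ^ d)⁻¹ * ρ z) :=
          lintegral_const_mul' _ _ ENNReal.ofReal_ne_top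
      _ ≤ ENNReal.ofReal (((d:ℝ)+1) * 2^d * r)
            * ((N : ℝ≥0∞) * ENNReal.ofReal (2^d * Θ p * Vb d * (2*r) ^ (-(d:ℝ)/p)) * Y) := by
          apply mul_le_mul_right
          exact midInt hd Θ hΘpos ρ hρm hρ0 h2r0 h2r1 hp hN1 hNr
  -- far bound
  have hfar : ∫⁻ z in A3, g z ≤ ENNReal.ofReal (((d:ℝ)+1) * 2^d * r) * L := by
    have hpt : ∀ z ∈ A3, g z ≤ ENNReal.ofReal (((d:ℝ)+1) * 2^d * r) * ENNReal.ofReal (ρ z) := by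
      intro z hz
      have hA : 1 ≤ ‖x - z‖ := by
        rw [show ‖x - z‖ = dist z x by rw [dist_comm, dist_eq_norm]]
        simpa [hA3, not_lt] using hz
      have hb : (1:ℝ)/2 ≤ ‖y - z‖ := by
        have h1 : ‖x - z‖ - ‖y - z‖ ≤ ‖(x - z) - (y - z)‖ := norm_sub_norm_le _ _
        have h2 : (x - z) - (y - z) = x - y := by abel
        rw [h2, ← hr] at h1
        linarith
      have hKb := hKd (x - z) (y - z) (1/2) (by norm_num) (by linarith) hb
      have hab : (x - z) - (y - z) = x - y := by abel
      rw [hab, ← hr] at hKb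
      have heq : ((d:ℝ)+1) * r / ((1:ℝ)/2)^d = ((d:ℝ)+1) * 2^d * r := by
        rw [div_pow]
        field_simp
        ring
      rw [heq] at hKb
      rw [hg, ← ENNReal.ofReal_mul (by positivity)]
      apply ENNReal.ofReal_le_ofReal
      exact mul_le_mul_of_nonneg_right hKb (hρ0 z)
    calc ∫⁻ z in A3, g z
        ≤ ∫⁻ z in A3, ENNReal.ofReal (((d:ℝ)+1) * 2^d * r) * ENNReal.ofReal (ρ z) :=
          setLIntegral_mono ((hρm.ennreal_ofReal).const_mul _) hpt
      _ = ENNReal.ofReal (((d:ℝ)+1) * 2^d * r) * ∫⁻ z in A3, ENNReal.ofReal (ρ z) :=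
          lintegral_const_mul' _ _ ENNReal.ofReal_ne_top
      _ ≤ ENNReal.ofReal (((d:ℝ)+1) * 2^d * r) * L := by
          apply mul_le_mul_right
          rw [hL]
          exact setLIntegral_le_lintegral _ _
  -- combine
  set E : ℝ := Real.exp d with hE
  have hE0 : 0 < E := Real.exp_pos _
  set T : ℝ := Θ p with hT
  have hT0 : 0 < T := hΘpos p
  set c1 : ℝ := 2^(d-1) * Gg d * Vb d with hc1
  have hc10 : 0 ≤ c1 := by
    have := (Gg_pos d).le
    have h2 := one_le_Vb d
    positivity
  have hVb0' : (0:ℝ) ≤ Vb d := by linarith [one_le_Vb d]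
  set a1 : ℝ := 2^(d-1) * Gg d * T * Vb d * (2*r) ^ (1-(d:ℝ)/p) with ha1
  set a2 : ℝ := 2^(d-1) * Gg d * T * Vb d * (3*r) ^ (1-(d:ℝ)/p) with ha2
  set a3 : ℝ := (((d:ℝ)+1) * 2^d * r) * ((N:ℝ) * (2^d * T * Vb d * (2*r) ^ (-(d:ℝ)/p))) with ha3
  have ha10 : 0 ≤ a1 := by
    rw [ha1]
    exact mul_nonneg (mul_nonneg (mul_nonneg (mul_nonneg (by positivity) (Gg_pos d).le)
      hT0.le) hVb0') (Real.rpow_nonneg h2r0.le _)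
  have ha20 : 0 ≤ a2 := by
    rw [ha2]
    exact mul_nonneg (mul_nonneg (mul_nonneg (mul_nonneg (by positivity) (Gg_pos d).le)
      hT0.le) hVb0') (Real.rpow_nonneg h3r0.le _)
  have hin0 : (0:ℝ) ≤ 2^d * T * Vb d * (2*r) ^ (-(d:ℝ)/p) :=
    mul_nonneg (mul_nonneg (mul_nonneg (by positivity) hT0.le) hVb0')
      (Real.rpow_nonneg h2r0.le _)
  have ha30 : 0 ≤ a3 := by
    rw [ha3]
    exact mul_nonneg (by positivity) (mul_nonneg (Nat.cast_nonneg N) hin0)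
  have hmid' : ∫⁻ z in A2, g z ≤ ENNReal.ofReal a3 * Y := by
    refine le_trans hmid (le_of_eq ?_)
    calc ENNReal.ofReal (((d:ℝ)+1) * 2^d * r)
          * ((N : ℝ≥0∞) * ENNReal.ofReal (2^d * T * Vb d * (2*r) ^ (-(d:ℝ)/p)) * Y)
        = (ENNReal.ofReal (((d:ℝ)+1) * 2^d * r)
            * (ENNReal.ofReal ((N:ℝ)) * ENNReal.ofReal (2^d * T * Vb d * (2*r) ^ (-(d:ℝ)/p)))) * Y := by
          rw [ENNReal.ofReal_natCast]; ring
      _ = ENNReal.ofReal a3 * Y := by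
          rw [← ENNReal.ofReal_mul (Nat.cast_nonneg N), ← ENNReal.ofReal_mul (by positivity), ha3]
  have htotal : ∫⁻ z, g z ≤ ENNReal.ofReal (a1 + a2 + a3) * Y
      + ENNReal.ofReal (((d:ℝ)+1) * 2^d * r) * L := by
    refine le_trans hstep ?_
    have h1 : ((∫⁻ z in A1, g z) + (∫⁻ z in A2, g z)) ≤ ENNReal.ofReal (a1 + a2 + a3) * Y := by
      calc ((∫⁻ z in A1, g z) + (∫⁻ z in A2, g z))
          ≤ (ENNReal.ofReal a1 * Y + ENNReal.ofReal a2 * Y) + ENNReal.ofReal a3 * Y :=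
            add_le_add hnear hmid'
        _ = ENNReal.ofReal (a1 + a2 + a3) * Y := by
            rw [← add_mul, ← add_mul, ← ENNReal.ofReal_add ha10 ha20,
              ← ENNReal.ofReal_add (by linarith) ha30]
    exact add_le_add h1 hfar
  refine le_trans htotal ?_
  apply add_le_add_left
  apply mul_le_mul_left
  apply ENNReal.ofReal_le_ofReal
  -- the real arithmetic
  have hb1 : a1 ≤ c1 * T * (2 * (r * E)) := by
    rw [ha1, hc1]
    calc 2^(d-1) * Gg d * T * Vb d * (2*r) ^ (1-(d:ℝ)/p)
        ≤ 2^(d-1) * Gg d * T * Vb d * (2 * (r * E)) := by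
          apply mul_le_mul_of_nonneg_left (hu 2 (by norm_num))
          exact mul_nonneg (mul_nonneg (mul_nonneg (by positivity) (Gg_pos d).le) hT0.le) hVb0'
      _ = 2^(d-1) * Gg d * Vb d * T * (2 * (r * E)) := by ring
  have hb2 : a2 ≤ c1 * T * (3 * (r * E)) := by
    rw [ha2, hc1]
    calc 2^(d-1) * Gg d * T * Vb d * (3*r) ^ (1-(d:ℝ)/p)
        ≤ 2^(d-1) * Gg d * T * Vb d * (3 * (r * E)) := by
          apply mul_le_mul_of_nonneg_left (hu 3 (by norm_num))
          exact mul_nonneg (mul_nonneg (mul_nonneg (by positivity) (Gg_pos d).le) hT0.le) hVb0'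
      _ = 2^(d-1) * Gg d * Vb d * T * (3 * (r * E)) := by ring
  have hb3 : a3 ≤ (((d:ℝ)+1) * 2^d * r) * ((3*p) * (2^d * T * Vb d * E)) := by
    rw [ha3]
    apply mul_le_mul_of_nonneg_left _ (by positivity)
    have hx : (2:ℝ)^d * T * Vb d * (2*r) ^ (-(d:ℝ)/p) ≤ 2^d * T * Vb d * E := by
      apply mul_le_mul_of_nonneg_left h2rneg
      exact mul_nonneg (mul_nonneg (by positivity) hT0.le) hVb0'
    calc (N:ℝ) * (2^d * T * Vb d * (2*r) ^ (-(d:ℝ)/p))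
        ≤ (N:ℝ) * (2^d * T * Vb d * E) :=
          mul_le_mul_of_nonneg_left hx (Nat.cast_nonneg N)
      _ ≤ (3*p) * (2^d * T * Vb d * E) := by
          apply mul_le_mul_of_nonneg_right hNle
          exact mul_nonneg (mul_nonneg (mul_nonneg (by positivity) hT0.le) hVb0') hE0.le
  have h4d : (2:ℝ)^d * 2^d = 4^d := by rw [← mul_pow]; norm_num
  calc a1 + a2 + a3
      ≤ c1 * T * (2 * (r * E)) + c1 * T * (3 * (r * E))
        + (((d:ℝ)+1) * 2^d * r) * ((3*p) * (2^d * T * Vb d * E)) := by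
        linarith
    _ = 5 * c1 * E * (r * T) + 3*((d:ℝ)+1)*(2^d*2^d)*(Vb d)*E * (r * p * T) := by ring
    _ = 5 * c1 * E * (r * T) + 3*((d:ℝ)+1)*4^d*(Vb d)*E * (r * p * T) := by rw [h4d]
    _ ≤ 5 * c1 * E * (r * p * T) + 3*((d:ℝ)+1)*4^d*(Vb d)*E * (r * p * T) := by
        have key : r * T ≤ r * p * T := by
          nlinarith [mul_nonneg (mul_pos hr0 hT0).le (by linarith : (0:ℝ) ≤ p - 1)]
        have hco : 0 ≤ 5 * c1 * E := by positivity
        nlinarith [mul_le_mul_of_nonneg_left key hco]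
    _ = (5*2^(d-1)*Gg d*Vb d*E + 3*((d:ℝ)+1)*4^d*Vb d*E) * (r * p * T) := by
        rw [hc1]; ring

set_option maxHeartbeats 1000000 in
/-- Mapping property of the Riesz kernel: for nonnegative
`ρ ∈ L¹(ℝ^d) ∩ Y^Θ_ul(ℝ^d)` one has
`∫ |K(x−z) − K(y−z)| ρ(z) dz ≤ C_d (‖ρ‖_{L¹} + ‖ρ‖_{Y^Θ_ul}) φ_Θ(|x−y|)`. -/
theorem stmt8 (d : ℕ) (hd : 2 ≤ d)
    (Θ : ℝ → ℝ) (hΘmono : Monotone Θ) (hΘpos : ∀ p, 0 < Θ p)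
    (K : EuclideanSpace ℝ (Fin d) → EuclideanSpace ℝ (Fin d))
    (hK : ∀ z, K z = (‖z‖ ^ d)⁻¹ • z) :
    ∃ C : ℝ, 0 < C ∧ ∀ ρ : EuclideanSpace ℝ (Fin d) → ℝ,
      Measurable ρ → Integrable ρ → (∀ z, 0 ≤ ρ z) →
      yudNorm Θ ρ < ⊤ →
      ∀ x y, (∫ z, ‖K (x - z) - K (y - z)‖ * ρ z)
        ≤ C * ((∫ z, ρ z) + (yudNorm Θ ρ).toReal) * phiTheta d Θ ‖x - y‖ := by
  classical
  have hGg := Gg_pos d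
  have hVb1 := one_le_Vb d
  have hVb0 : (0:ℝ) < Vb d := by linarith
  have hΘd1 := hΘpos ((d:ℝ)+1)
  have hd1r : (0:ℝ) < (d:ℝ)+1 := by positivity
  set φinf : ℝ := Real.exp (-((d:ℝ)+1)) * ((d:ℝ)+1) * Θ ((d:ℝ)+1) with hφinf
  have hφinf0 : 0 < φinf := by
    rw [hφinf]
    exact mul_pos (mul_pos (Real.exp_pos _) hd1r) hΘd1
  set Ainf : ℝ := 2^(d-1) * Gg d * Θ ((d:ℝ)+1) * Vb d with hAinf
  have hAinf0 : 0 < Ainf := by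
    rw [hAinf]
    exact mul_pos (mul_pos (mul_pos (by positivity) hGg) hΘd1) hVb0
  set C1 : ℝ := 5*2^(d-1)*Gg d*Vb d*Real.exp d + 3*((d:ℝ)+1)*4^d*Vb d*Real.exp d with hC1
  have hC10 : 0 < C1 := by
    rw [hC1]
    have h1 : (0:ℝ) < 5*2^(d-1)*Gg d*Vb d*Real.exp d :=
      mul_pos (mul_pos (mul_pos (by positivity) hGg) hVb0) (Real.exp_pos _)
    have h2 : (0:ℝ) < 3*((d:ℝ)+1)*4^d*Vb d*Real.exp d :=
      mul_pos (mul_pos (by positivity) hVb0) (Real.exp_pos _)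
    linarith
  set C2 : ℝ := 2^d / Θ ((d:ℝ)+1) with hC2
  have hC20 : 0 < C2 := by rw [hC2]; positivity
  set C3 : ℝ := (2 * Ainf + 2) / φinf with hC3
  have hC30 : 0 < C3 := by
    rw [hC3]
    exact div_pos (by linarith) hφinf0
  set Ctot : ℝ := C1 + C2 + C3 + 1 with hCtot
  have hCtot0 : 0 < Ctot := by rw [hCtot]; linarith
  refine ⟨Ctot, hCtot0, ?_⟩
  intro ρ hρm hρint hρ0 hYfin x y
  have hIρ0 : 0 ≤ ∫ z, ρ z := integral_nonneg hρ0
  have hYtr0 : 0 ≤ (yudNorm Θ ρ).toReal := ENNReal.toReal_nonneg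
  have hYeq : yudNorm Θ ρ = ENNReal.ofReal ((yudNorm Θ ρ).toReal) :=
    (ENNReal.ofReal_toReal hYfin.ne).symm
  have hLeq : ENNReal.ofReal (∫ z, ρ z) = ∫⁻ z, ENNReal.ofReal (ρ z) :=
    ofReal_integral_eq_lintegral_ofReal hρint (ae_of_all _ hρ0)
  have hφ0 : 0 ≤ phiTheta d Θ ‖x - y‖ := by
    unfold phiTheta
    split_ifs with h1 h2
    · exact le_refl 0
    · have hr0 : 0 < ‖x - y‖ := lt_of_le_of_ne (norm_nonneg _) (Ne.symm h1)
      have hΘa := (hΘpos |Real.log ‖x - y‖|).le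
      have habs : 0 ≤ |Real.log ‖x - y‖| := abs_nonneg _
      exact mul_nonneg (mul_nonneg hr0.le habs) hΘa
    · exact le_of_lt (mul_pos (mul_pos (Real.exp_pos _) hd1r) hΘd1)
  have hKm : Measurable K := by
    have hKfun : K = fun z => (‖z‖ ^ d)⁻¹ • z := funext hK
    rw [hKfun]
    exact ((measurable_norm.pow_const d).inv).smul measurable_id
  have hgm : Measurable fun z => ‖K (x - z) - K (y - z)‖ * ρ z := by
    apply Measurable.mul _ hρm
    apply Measurable.norm
    exact (hKm.comp (measurable_const.sub measurable_id)).sub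
      (hKm.comp (measurable_const.sub measurable_id))
  have hRHS0 : 0 ≤ Ctot * ((∫ z, ρ z) + (yudNorm Θ ρ).toReal) * phiTheta d Θ ‖x - y‖ :=
    mul_nonneg (mul_nonneg hCtot0.le (by linarith)) hφ0
  suffices h : ∫⁻ z, ENNReal.ofReal (‖K (x - z) - K (y - z)‖ * ρ z)
      ≤ ENNReal.ofReal (Ctot * ((∫ z, ρ z) + (yudNorm Θ ρ).toReal) * phiTheta d Θ ‖x - y‖) by
    by_cases hint : Integrable (fun z => ‖K (x - z) - K (y - z)‖ * ρ z)
    · rw [integral_eq_lintegral_of_nonneg_ae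
        (ae_of_all _ fun z => mul_nonneg (norm_nonneg _) (hρ0 z)) hgm.aestronglyMeasurable]
      exact ENNReal.toReal_le_of_le_ofReal hRHS0 h
    · rw [integral_undef hint]
      exact hRHS0
  rcases eq_or_lt_of_le (norm_nonneg (x - y)) with hr0 | hr0
  · -- x = y
    have hxy : x = y := by
      rw [← sub_eq_zero]
      exact norm_eq_zero.mp hr0.symm
    subst hxy
    simp
  · by_cases hrlt : ‖x - y‖ < Real.exp (-((d:ℝ)+1))
    · -- small case
      have hlog : Real.log ‖x - y‖ < -((d:ℝ)+1) := by
        have h := Real.log_lt_log hr0 hrlt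
        rwa [Real.log_exp] at h
      have hlogneg : Real.log ‖x - y‖ < 0 := by linarith
      have hp : (d:ℝ)+1 ≤ -Real.log ‖x - y‖ := by linarith
      have hp1 : (1:ℝ) ≤ -Real.log ‖x - y‖ := by
        have : (0:ℝ) ≤ (d:ℝ) := Nat.cast_nonneg d
        linarith
      have hφval : phiTheta d Θ ‖x - y‖
          = ‖x - y‖ * (-Real.log ‖x - y‖) * Θ (-Real.log ‖x - y‖) := by
        unfold phiTheta
        rw [if_neg (ne_of_gt hr0), if_pos hrlt, abs_of_neg hlogneg]
      set W : ℝ := ‖x - y‖ * (-Real.log ‖x - y‖) * Θ (-Real.log ‖x - y‖) with hW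
      have hΘW := hΘpos (-Real.log ‖x - y‖)
      have hW0 : 0 ≤ W := by
        rw [hW]
        exact mul_nonneg (mul_nonneg hr0.le (by linarith)) hΘW.le
      have hWge : ‖x - y‖ * ((d:ℝ)+1) * Θ ((d:ℝ)+1) ≤ W := by
        rw [hW]
        have hθle : Θ ((d:ℝ)+1) ≤ Θ (-Real.log ‖x - y‖) := hΘmono hp
        calc ‖x - y‖ * ((d:ℝ)+1) * Θ ((d:ℝ)+1)
            ≤ ‖x - y‖ * (-Real.log ‖x - y‖) * Θ ((d:ℝ)+1) := by
              apply mul_le_mul_of_nonneg_right _ hΘd1.le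
              exact mul_le_mul_of_nonneg_left hp hr0.le
          _ ≤ ‖x - y‖ * (-Real.log ‖x - y‖) * Θ (-Real.log ‖x - y‖) := by
              apply mul_le_mul_of_nonneg_left hθle
              exact mul_nonneg hr0.le (by linarith)
      refine le_trans (small_bound hd Θ hΘmono hΘpos K hK ρ hρm hρ0 x y hr0 hrlt) ?_
      rw [hφval]
      set W : ℝ := ‖x - y‖ * (-Real.log ‖x - y‖) * Θ (-Real.log ‖x - y‖) with hWs
      set Yt : ℝ := (yudNorm Θ ρ).toReal with hYts
      set J : ℝ := ∫ z, ρ z with hJs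
      rw [← hC1]
      have hC1W0 : 0 ≤ C1 * W := mul_nonneg hC10.le hW0
      have hcr0 : (0:ℝ) ≤ ((d:ℝ)+1) * 2^d * ‖x - y‖ := by positivity
      have e1 : ENNReal.ofReal (C1 * W) * yudNorm Θ ρ = ENNReal.ofReal (C1 * W * Yt) := by
        conv_lhs => rw [hYeq]
        rw [← ENNReal.ofReal_mul hC1W0]
      have e2 : ENNReal.ofReal (((d:ℝ)+1) * 2^d * ‖x - y‖) * (∫⁻ z, ENNReal.ofReal (ρ z))
          = ENNReal.ofReal (((d:ℝ)+1) * 2^d * ‖x - y‖ * J) := by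
        rw [← hLeq, ← ENNReal.ofReal_mul hcr0]
      rw [e1, e2, ← ENNReal.ofReal_add (mul_nonneg hC1W0 hYtr0) (mul_nonneg hcr0 hIρ0)]
      apply ENNReal.ofReal_le_ofReal
      have eC2 : C2 * (‖x - y‖ * ((d:ℝ)+1) * Θ ((d:ℝ)+1)) = ((d:ℝ)+1)*2^d*‖x - y‖ := by
        rw [hC2]
        field_simp
      have h2' : ((d:ℝ)+1)*2^d*‖x - y‖ ≤ C2 * W := by
        calc ((d:ℝ)+1)*2^d*‖x - y‖ = C2 * (‖x - y‖ * ((d:ℝ)+1) * Θ ((d:ℝ)+1)) := eC2.symm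
          _ ≤ C2 * W := mul_le_mul_of_nonneg_left hWge hC20.le
      have eA : C1 * W * Yt ≤ Ctot * W * Yt := by
        apply mul_le_mul_of_nonneg_right _ hYtr0
        apply mul_le_mul_of_nonneg_right _ hW0
        linarith
      have eB : ((d:ℝ)+1)*2^d*‖x - y‖ * J ≤ Ctot * W * J := by
        apply mul_le_mul_of_nonneg_right _ hIρ0
        refine h2'.trans (mul_le_mul_of_nonneg_right ?_ hW0)
        linarith
      nlinarith [eA, eB]
    · -- large case
      have hmeas1 : Measurable fun z : EuclideanSpace ℝ (Fin d) =>
          ENNReal.ofReal (‖K (x - z)‖ * ρ z) :=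
        (((hKm.comp (measurable_const.sub measurable_id)).norm).mul hρm).ennreal_ofReal
      have hφval2 : phiTheta d Θ ‖x - y‖ = φinf := by
        unfold phiTheta
        rw [if_neg (ne_of_gt hr0), if_neg hrlt, hφinf]
      calc ∫⁻ z, ENNReal.ofReal (‖K (x - z) - K (y - z)‖ * ρ z)
          ≤ ∫⁻ z, (ENNReal.ofReal (‖K (x - z)‖ * ρ z) + ENNReal.ofReal (‖K (y - z)‖ * ρ z)) := by
            apply lintegral_mono
            intro z
            refine le_trans (ENNReal.ofReal_le_ofReal ?_) ENNReal.ofReal_add_le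
            calc ‖K (x - z) - K (y - z)‖ * ρ z
                ≤ (‖K (x - z)‖ + ‖K (y - z)‖) * ρ z :=
                  mul_le_mul_of_nonneg_right (norm_sub_le _ _) (hρ0 z)
              _ = ‖K (x - z)‖ * ρ z + ‖K (y - z)‖ * ρ z := by ring
        _ = (∫⁻ z, ENNReal.ofReal (‖K (x - z)‖ * ρ z))
            + ∫⁻ z, ENNReal.ofReal (‖K (y - z)‖ * ρ z) := lintegral_add_left hmeas1 _
        _ ≤ (ENNReal.ofReal Ainf * yudNorm Θ ρ + ∫⁻ z, ENNReal.ofReal (ρ z))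
            + (ENNReal.ofReal Ainf * yudNorm Θ ρ + ∫⁻ z, ENNReal.ofReal (ρ z)) :=
            add_le_add (large_bound hd Θ hΘpos K hK ρ hρm hρ0 x)
              (large_bound hd Θ hΘpos K hK ρ hρm hρ0 y)
        _ ≤ ENNReal.ofReal (Ctot * ((∫ z, ρ z) + (yudNorm Θ ρ).toReal) * phiTheta d Θ ‖x - y‖) := by
            rw [hφval2]
            have hA0 : 0 ≤ Ainf * (yudNorm Θ ρ).toReal + (∫ z, ρ z) := by
              have := mul_nonneg hAinf0.le hYtr0
              linarith
            have e1 : ENNReal.ofReal Ainf * yudNorm Θ ρ + ∫⁻ z, ENNReal.ofReal (ρ z)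
                = ENNReal.ofReal (Ainf * (yudNorm Θ ρ).toReal + (∫ z, ρ z)) := by
              conv_lhs => rw [hYeq, ← hLeq]
              rw [← ENNReal.ofReal_mul hAinf0.le,
                ← ENNReal.ofReal_add (mul_nonneg hAinf0.le hYtr0) hIρ0]
            rw [e1, ← ENNReal.ofReal_add hA0 hA0]
            apply ENNReal.ofReal_le_ofReal
            have hC3φ : C3 * φinf = 2 * Ainf + 2 := by
              rw [hC3]
              field_simp
            have hle1 : 2 * Ainf ≤ Ctot * φinf := by
              have h := mul_le_mul_of_nonneg_right
                (show C3 ≤ Ctot by rw [hCtot]; linarith) hφinf0.le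
              linarith
            have hle2 : (2:ℝ) ≤ Ctot * φinf := by
              have h := mul_le_mul_of_nonneg_right
                (show C3 ≤ Ctot by rw [hCtot]; linarith) hφinf0.le
              linarith
            nlinarith [mul_le_mul_of_nonneg_right hle1 hYtr0,
              mul_le_mul_of_nonneg_right hle2 hIρ0]
end

section
/- Let m ∈ ℕ and define Θ_m(p) = p·(log_1 p)²·(log_2 p)²⋯(log_m p)² for p ≥ exp_m(1), extended constantly below exp_m(1), where log_k denotes the k-fold iterated logarithm and exp_{m+1}(1) = e^{exp_m(1)}. Then the function Φ_{Θ_m}(t) = ∫₀ᵗ φ_{Θ_m}(s) ds, where φ_{Θ_m}(r) = r|log r|Θ_m(|log r|) for small r > 0, satisfies the second-order Osgood condition ∫_{0+} dt/√(Φ_{Θ_m}(t)) = +∞. -/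
open MeasureTheory Real Set Filter Topology

/-- Iterated logarithm: `itlog 0 = id`, `itlog 1 r = |log r|`,
`itlog (m+1) r = log (itlog m r)` for `m ≥ 1`. -/
noncomputable def itlog : ℕ → ℝ → ℝ
  | 0, r => r
  | 1, r => |Real.log r|
  | (n + 2), r => Real.log (itlog (n + 1) r)

/-- Iterated exponential: `expIter 0 = 1`, `expIter (m+1) = e^{expIter m}`. -/
noncomputable def expIter : ℕ → ℝ
  | 0 => 1
  | (n + 1) => Real.exp (expIter n)

/-- The iterated-logarithmic growth function
`Θ_m(p) = p (log₁ p)² (log₂ p)² ⋯ (log_m p)²` for `p ≥ exp_m(1)`,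
extended constantly below `exp_m(1)`. -/
noncomputable def ThetaM (m : ℕ) (p : ℝ) : ℝ :=
  if expIter m ≤ p then p * ∏ k ∈ Finset.range m, (itlog (k + 1) p) ^ 2
  else expIter m * ∏ k ∈ Finset.range m, (itlog (k + 1) (expIter m)) ^ 2

/-- The associated modulus `φ_{Θ_m}(r) = r |log r| Θ_m(|log r|)` for small `r > 0`,
extended continuously. -/
noncomputable def phiThetaM (m : ℕ) (r : ℝ) : ℝ :=
  if r ≤ 0 then 0
  else if r < Real.exp (-1) then r * |Real.log r| * ThetaM m |Real.log r|
  else Real.exp (-1) * ThetaM m 1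

namespace Stmt14Aux

lemma one_le_expIter (n : ℕ) : 1 ≤ expIter n := by
  induction n with
  | zero => exact le_rfl
  | succ n ih =>
    have : (0:ℝ) ≤ expIter n := le_trans zero_le_one ih
    calc (1:ℝ) = Real.exp 0 := Real.exp_zero.symm
    _ ≤ Real.exp (expIter n) := Real.exp_le_exp.2 this
    _ = expIter (n+1) := rfl

lemma expIter_pos (n : ℕ) : 0 < expIter n := lt_of_lt_of_le one_pos (one_le_expIter n)

lemma expIter_le_succ (n : ℕ) : expIter n ≤ expIter (n + 1) := by
  have := Real.add_one_le_exp (expIter n)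
  have h2 : expIter n ≤ expIter n + 1 := by linarith
  exact h2.trans (by simpa [expIter] using this)

lemma expIter_mono : Monotone expIter := monotone_nat_of_le_succ expIter_le_succ

lemma iterLog_ge : ∀ j n : ℕ, j ≤ n → ∀ p : ℝ, expIter n ≤ p → expIter (n - j) ≤ Real.log^[j] p := by
  intro j
  induction j with
  | zero => intro n _ p hp; simpa using hp
  | succ j ih =>
    intro n hj p hp
    have hj' : j ≤ n := le_trans (Nat.le_succ j) hj
    have h1 : expIter (n - j) ≤ Real.log^[j] p := ih n hj' p hp
    have hnj : n - j = (n - (j + 1)) + 1 := by omega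
    rw [Function.iterate_succ_apply']
    have h2 : Real.exp (expIter (n - (j+1))) ≤ Real.log^[j] p := by
      rw [hnj] at h1; exact h1
    calc expIter (n - (j+1)) = Real.log (Real.exp (expIter (n - (j+1)))) := (Real.log_exp _).symm
    _ ≤ Real.log (Real.log^[j] p) := Real.log_le_log (Real.exp_pos _) h2

lemma one_le_iterLog {j n : ℕ} (hj : j ≤ n) {p : ℝ} (hp : expIter n ≤ p) :
    1 ≤ Real.log^[j] p :=
  le_trans (one_le_expIter _) (iterLog_ge j n hj p hp)

lemma iterLog_pos {j n : ℕ} (hj : j ≤ n) {p : ℝ} (hp : expIter n ≤ p) :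
    0 < Real.log^[j] p := lt_of_lt_of_le one_pos (one_le_iterLog hj hp)

lemma iterLog_le_self : ∀ j n : ℕ, j ≤ n → ∀ p : ℝ, expIter n ≤ p → Real.log^[j] p ≤ p := by
  intro j
  induction j with
  | zero => intro n _ p _; simp
  | succ j ih =>
    intro n hj p hp
    have hj' : j ≤ n := le_trans (Nat.le_succ j) hj
    have h1 : Real.log^[j] p ≤ p := ih n hj' p hp
    have hpos : 0 < Real.log^[j] p := iterLog_pos hj' hp
    rw [Function.iterate_succ_apply']
    have := Real.log_le_sub_one_of_pos hpos
    linarith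

lemma iterLog_mono : ∀ j n : ℕ, j ≤ n → ∀ p q : ℝ, expIter n ≤ p → p ≤ q →
    Real.log^[j] p ≤ Real.log^[j] q := by
  intro j
  induction j with
  | zero => intro n _ p q _ h; simpa using h
  | succ j ih =>
    intro n hj p q hp hpq
    have hj' : j ≤ n := le_trans (Nat.le_succ j) hj
    rw [Function.iterate_succ_apply', Function.iterate_succ_apply']
    exact Real.log_le_log (iterLog_pos hj' hp) (ih n hj' p q hp hpq)

lemma slow_var {x y : ℝ} (hy : Real.exp 1 ≤ y) (hxy : y ≤ x) :
    y * Real.log x ≤ x * Real.log y := by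
  have hy0 : 0 < y := lt_of_lt_of_le (Real.exp_pos 1) hy
  have hx0 : 0 < x := lt_of_lt_of_le hy0 hxy
  have h1 : 1 ≤ Real.log y := (Real.le_log_iff_exp_le hy0).2 hy
  have h2 : Real.log x - Real.log y = Real.log (x / y) := (Real.log_div hx0.ne' hy0.ne').symm
  have h3 : Real.log (x / y) ≤ x / y - 1 := Real.log_le_sub_one_of_pos (div_pos hx0 hy0)
  have h4 : y * (Real.log x - Real.log y) ≤ x - y := by
    rw [h2]
    have := mul_le_mul_of_nonneg_left h3 hy0.le
    calc y * Real.log (x / y) ≤ y * (x / y - 1) := this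
    _ = x - y := by field_simp
  have h5 : x - y ≤ (x - y) * Real.log y :=
    le_mul_of_one_le_right (by linarith) h1
  nlinarith [h4, h5]

lemma iterLog_ratio : ∀ j n : ℕ, j ≤ n → ∀ p q : ℝ, expIter (n + 1) ≤ p → p ≤ q →
    p * Real.log^[j] q ≤ q * Real.log^[j] p := by
  intro j
  induction j with
  | zero => intro n _ p q _ _; simp [mul_comm]
  | succ j ih =>
    intro n hj p q hp hpq
    have hj' : j ≤ n := le_trans (Nat.le_succ j) hj
    have hjn1 : j ≤ n + 1 := le_trans hj' (Nat.le_succ n)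
    have hp0 : 0 < p := lt_of_lt_of_le (expIter_pos _) hp
    have hLp : Real.exp 1 ≤ Real.log^[j] p := by
      have h := iterLog_ge j (n+1) hjn1 p hp
      have : expIter 1 ≤ expIter (n + 1 - j) := expIter_mono (by omega)
      have he : expIter 1 = Real.exp 1 := by simp [expIter]
      linarith [he ▸ this, h]
    have hLmono : Real.log^[j] p ≤ Real.log^[j] q :=
      iterLog_mono j (n+1) hjn1 p q hp hpq
    have hsv := slow_var hLp hLmono
    rw [Function.iterate_succ_apply', Function.iterate_succ_apply'] at *
    have hIH : p * Real.log^[j] q ≤ q * Real.log^[j] p := ih n hj' p q hp hpq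
    have hLpPos : 0 < Real.log^[j] p := iterLog_pos hjn1 hp
    have hL'p : 0 ≤ Real.log (Real.log^[j] p) := by
      have := one_le_iterLog (Nat.succ_le_succ hj') hp
      rw [Function.iterate_succ_apply'] at this; linarith
    have key : Real.log^[j] p * (p * Real.log (Real.log^[j] q)) ≤
        Real.log^[j] p * (q * Real.log (Real.log^[j] p)) := by
      calc Real.log^[j] p * (p * Real.log (Real.log^[j] q))
          = p * (Real.log^[j] p * Real.log (Real.log^[j] q)) := by ring
      _ ≤ p * (Real.log^[j] q * Real.log (Real.log^[j] p)) :=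
          mul_le_mul_of_nonneg_left hsv hp0.le
      _ = (p * Real.log^[j] q) * Real.log (Real.log^[j] p) := by ring
      _ ≤ (q * Real.log^[j] p) * Real.log (Real.log^[j] p) :=
          mul_le_mul_of_nonneg_right hIH hL'p
      _ = Real.log^[j] p * (q * Real.log (Real.log^[j] p)) := by ring
    exact le_of_mul_le_mul_left key hLpPos

lemma itlog_eq : ∀ (j : ℕ) (p : ℝ), 1 ≤ p → itlog j p = Real.log^[j] p
  | 0, p, _ => rfl
  | 1, p, hp => by
    simp [itlog, abs_of_nonneg (Real.log_nonneg hp)]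
  | (n+2), p, hp => by
    rw [show itlog (n+2) p = Real.log (itlog (n+1) p) from rfl, itlog_eq (n+1) p hp]
    exact (Function.iterate_succ_apply' Real.log (n+1) p).symm

lemma measurable_itlog : ∀ j, Measurable (itlog j)
  | 0 => measurable_id
  | 1 => Real.measurable_log.abs
  | (n+2) => Real.measurable_log.comp (measurable_itlog (n+1))

lemma measurable_ThetaM (m : ℕ) : Measurable (ThetaM m) := by
  unfold ThetaM
  refine Measurable.ite (measurableSet_le measurable_const measurable_id) ?_ measurable_const
  exact measurable_id.mul (Finset.measurable_prod _ fun k _ => (measurable_itlog (k+1)).pow_const 2)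

lemma measurable_phi (m : ℕ) : Measurable (phiThetaM m) := by
  unfold phiThetaM
  refine Measurable.ite (measurableSet_le measurable_id measurable_const) measurable_const ?_
  refine Measurable.ite (measurableSet_lt measurable_id measurable_const) ?_ measurable_const
  exact (measurable_id.mul Real.measurable_log.abs).mul
    ((measurable_ThetaM m).comp Real.measurable_log.abs)



lemma ThetaM_const {m : ℕ} {p : ℝ} (hp : ¬ expIter m ≤ p) :
    ThetaM m p = ThetaM m (expIter m) := by
  rw [ThetaM, if_neg hp, ThetaM, if_pos le_rfl]

lemma ThetaM_eq_of_ge {m : ℕ} {p : ℝ} (hp : expIter m ≤ p) :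
    ThetaM m p = p * ∏ k ∈ Finset.range m, (Real.log^[k+1] p) ^ 2 := by
  rw [ThetaM, if_pos hp]
  congr 1
  exact Finset.prod_congr rfl fun k _ => by
    rw [itlog_eq _ _ ((one_le_expIter m).trans hp)]

lemma prod_iterLog_pos {m : ℕ} {p : ℝ} (hp : expIter m ≤ p) :
    0 < ∏ k ∈ Finset.range m, (Real.log^[k+1] p) ^ 2 := by
  refine Finset.prod_pos fun k hk => ?_
  exact pow_pos (iterLog_pos (Finset.mem_range.1 hk) hp) 2

lemma one_le_prod_iterLog {m : ℕ} {p : ℝ} (hp : expIter m ≤ p) :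
    1 ≤ ∏ k ∈ Finset.range m, (Real.log^[k+1] p) ^ 2 := by
  calc (1:ℝ) = ∏ _k ∈ Finset.range m, 1 := by simp
  _ ≤ ∏ k ∈ Finset.range m, (Real.log^[k+1] p) ^ 2 := by
    refine Finset.prod_le_prod (by intros; norm_num) (fun k hk => ?_)
    have h1 := one_le_iterLog (Finset.mem_range.1 hk) hp
    nlinarith

lemma ThetaM_pos (m : ℕ) (p : ℝ) : 0 < ThetaM m p := by
  by_cases hp : expIter m ≤ p
  · rw [ThetaM_eq_of_ge hp]
    exact mul_pos (lt_of_lt_of_le (expIter_pos m) hp) (prod_iterLog_pos hp)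
  · rw [ThetaM_const hp, ThetaM_eq_of_ge le_rfl]
    exact mul_pos (expIter_pos m) (prod_iterLog_pos le_rfl)

lemma ThetaM_le_of_ge {m : ℕ} {p : ℝ} (hp : expIter m ≤ p) :
    ThetaM m p ≤ p ^ (2*m+1) := by
  have hp1 : 1 ≤ p := (one_le_expIter m).trans hp
  rw [ThetaM_eq_of_ge hp]
  have hb : ∏ k ∈ Finset.range m, (Real.log^[k+1] p) ^ 2 ≤
      ∏ _k ∈ Finset.range m, p ^ 2 := by
    refine Finset.prod_le_prod (fun k _ => sq_nonneg _) (fun k hk => ?_)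
    have hk' : k + 1 ≤ m := Finset.mem_range.1 hk
    have h0 : 0 ≤ Real.log^[k+1] p := le_trans zero_le_one (one_le_iterLog hk' hp)
    exact pow_le_pow_left₀ h0 (iterLog_le_self _ _ hk' _ hp) 2
  calc p * ∏ k ∈ Finset.range m, (Real.log^[k+1] p) ^ 2
      ≤ p * ∏ _k ∈ Finset.range m, p ^ 2 := mul_le_mul_of_nonneg_left hb (by linarith)
  _ = p ^ (2*m+1) := by rw [Finset.prod_const, Finset.card_range]; ring

lemma ThetaM_one_le (m : ℕ) : ThetaM m 1 ≤ (expIter m) ^ (2*m+1) := by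
  by_cases hp : expIter m ≤ 1
  · have := ThetaM_le_of_ge hp
    simpa using this.trans (by simp [one_le_expIter m, one_le_pow₀])
  · rw [ThetaM_const hp]
    exact ThetaM_le_of_ge le_rfl

/-- the constant bounding `phiThetaM m` globally -/
noncomputable def Cm (m : ℕ) : ℝ := (2*(m:ℝ)+2) ^ (2*m+2) + (expIter m) ^ (2*m+2)

lemma Cm_nonneg (m : ℕ) : 0 ≤ Cm m := by
  have h1 : (0:ℝ) ≤ (2*(m:ℝ)+2) ^ (2*m+2) := by positivity
  have h2 : (0:ℝ) ≤ (expIter m) ^ (2*m+2) := pow_nonneg (expIter_pos m).le _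
  unfold Cm; linarith

lemma rLpow_le {r : ℝ} (hr : 0 < r) (hr1 : r ≤ 1) (K : ℕ) (hK : 1 ≤ K) :
    r * (-Real.log r) ^ K ≤ (K:ℝ) ^ K := by
  set L : ℝ := -Real.log r with hL
  have hL0 : 0 ≤ L := by
    have := Real.log_nonpos hr.le hr1; linarith
  have hKpos : (0:ℝ) < K := by exact_mod_cast hK
  have h1 : L ≤ (K:ℝ) * Real.exp (L / K) := by
    have h := Real.add_one_le_exp (L / K)
    have h2 : L / K ≤ Real.exp (L / K) := by linarith
    calc L = (K:ℝ) * (L / K) := by field_simp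
    _ ≤ (K:ℝ) * Real.exp (L / K) := mul_le_mul_of_nonneg_left h2 hKpos.le
  have h2 : L ^ K ≤ ((K:ℝ) * Real.exp (L / K)) ^ K := pow_le_pow_left₀ hL0 h1 K
  have h3 : ((K:ℝ) * Real.exp (L / K)) ^ K = (K:ℝ) ^ K * Real.exp L := by
    rw [mul_pow, ← Real.exp_nat_mul]
    congr 2
    field_simp
  have h4 : Real.exp L = r⁻¹ := by
    rw [hL, Real.exp_neg, Real.exp_log hr]
  have h5 : r * L ^ K ≤ r * ((K:ℝ) ^ K * r⁻¹) := by
    refine mul_le_mul_of_nonneg_left ?_ hr.le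
    rw [← h4, ← h3]; exact h2
  calc r * L ^ K ≤ r * ((K:ℝ) ^ K * r⁻¹) := h5
  _ = (K:ℝ) ^ K := by field_simp

lemma phi_nonneg (m : ℕ) (r : ℝ) : 0 ≤ phiThetaM m r := by
  unfold phiThetaM
  split_ifs with h1 h2
  · exact le_rfl
  · push_neg at h1
    exact mul_nonneg (mul_nonneg h1.le (abs_nonneg _)) (ThetaM_pos m _).le
  · exact mul_nonneg (Real.exp_pos _).le (ThetaM_pos m _).le

lemma phi_pos (m : ℕ) {r : ℝ} (hr : 0 < r) : 0 < phiThetaM m r := by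
  unfold phiThetaM
  rw [if_neg (not_le.2 hr)]
  split_ifs with h2
  · have hlt1 : r < 1 := lt_trans h2 (by
      calc Real.exp (-1) < Real.exp 0 := Real.exp_lt_exp.2 (by norm_num)
      _ = 1 := Real.exp_zero)
    have : Real.log r < 0 := Real.log_neg hr hlt1
    exact mul_pos (mul_pos hr (abs_pos.2 this.ne)) (ThetaM_pos m _)
  · exact mul_pos (Real.exp_pos _) (ThetaM_pos m _)

lemma phi_le_Cm (m : ℕ) (r : ℝ) : phiThetaM m r ≤ Cm m := by
  have h1 : (0:ℝ) ≤ (2*(m:ℝ)+2) ^ (2*m+2) := by positivity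
  have hE1 : (1:ℝ) ≤ expIter m := one_le_expIter m
  have h2 : (0:ℝ) ≤ (expIter m) ^ (2*m+2) := pow_nonneg (expIter_pos m).le _
  unfold phiThetaM
  split_ifs with hr0 hre
  · exact Cm_nonneg m
  · push_neg at hr0
    have hlt1 : r < 1 := lt_trans hre (by
      calc Real.exp (-1) < Real.exp 0 := Real.exp_lt_exp.2 (by norm_num)
      _ = 1 := Real.exp_zero)
    have hlog : Real.log r < 0 := Real.log_neg hr0 hlt1
    have habs : |Real.log r| = -Real.log r := abs_of_neg hlog
    set L : ℝ := -Real.log r with hLdef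
    have hL0 : 0 < L := by simp only [hLdef]; linarith
    rw [habs]
    by_cases hbr : expIter m ≤ L
    · have hTh : ThetaM m L ≤ L ^ (2*m+1) := ThetaM_le_of_ge hbr
      have key : r * L * ThetaM m L ≤ r * L ^ (2*m+2) := by
        have : r * L * ThetaM m L ≤ r * L * L ^ (2*m+1) :=
          mul_le_mul_of_nonneg_left hTh (mul_nonneg hr0.le hL0.le)
        calc r * L * ThetaM m L ≤ r * L * L ^ (2*m+1) := this
        _ = r * L ^ (2*m+2) := by ring
      have key2 : r * L ^ (2*m+2) ≤ ((2*m+2 : ℕ):ℝ) ^ (2*m+2) :=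
        rLpow_le hr0 hlt1.le (2*m+2) (by omega)
      have : ((2*m+2:ℕ):ℝ) = 2*(m:ℝ)+2 := by push_cast; ring
      rw [this] at key2
      unfold Cm
      linarith
    · have hTc : ThetaM m L = ThetaM m (expIter m) := ThetaM_const hbr
      have hTh : ThetaM m (expIter m) ≤ (expIter m) ^ (2*m+1) := ThetaM_le_of_ge le_rfl
      have hLE : L ≤ expIter m := le_of_not_ge hbr
      have key : r * L * ThetaM m L ≤ (expIter m) ^ (2*m+2) := by
        rw [hTc]
        have hr1 : r ≤ 1 := hlt1.le
        have hTnn : 0 < ThetaM m (expIter m) := ThetaM_pos m _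
        calc r * L * ThetaM m (expIter m) ≤ 1 * expIter m * (expIter m)^(2*m+1) := by
              apply mul_le_mul
              · apply mul_le_mul hr1 hLE hL0.le zero_le_one
              · exact hTh
              · exact hTnn.le
              · positivity
        _ = (expIter m) ^ (2*m+2) := by ring
      unfold Cm; linarith
  · have hTh : ThetaM m 1 ≤ (expIter m) ^ (2*m+1) := ThetaM_one_le m
    have he1 : Real.exp (-1) ≤ 1 := by
      calc Real.exp (-1) ≤ Real.exp 0 := Real.exp_le_exp.2 (by norm_num)
      _ = 1 := Real.exp_zero
    have hTnn : 0 < ThetaM m 1 := ThetaM_pos m 1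
    have key : Real.exp (-1) * ThetaM m 1 ≤ (expIter m) ^ (2*m+2) := by
      calc Real.exp (-1) * ThetaM m 1 ≤ 1 * (expIter m)^(2*m+1) :=
            mul_le_mul he1 hTh hTnn.le zero_le_one
      _ = (expIter m)^(2*m+1) := one_mul _
      _ ≤ (expIter m)^(2*m+2) := pow_le_pow_right₀ hE1 (by omega)
    unfold Cm; linarith

lemma phi_intervalIntegrable (m : ℕ) (a b : ℝ) :
    IntervalIntegrable (phiThetaM m) volume a b := by
  rw [intervalIntegrable_iff]
  apply Measure.integrableOn_of_bounded (M := Cm m) measure_Ioc_lt_top.ne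
    (measurable_phi m).aestronglyMeasurable
  filter_upwards with x
  rw [Real.norm_eq_abs, abs_of_nonneg (phi_nonneg m x)]
  exact phi_le_Cm m x

lemma continuous_Phi (m : ℕ) : Continuous (fun t => ∫ s in (0:ℝ)..t, phiThetaM m s) :=
  intervalIntegral.continuous_primitive (fun a b => phi_intervalIntegrable m a b) 0

lemma Phi_pos (m : ℕ) {t : ℝ} (ht : 0 < t) : 0 < ∫ s in (0:ℝ)..t, phiThetaM m s :=
  intervalIntegral.intervalIntegral_pos_of_pos_on (phi_intervalIntegrable m 0 t)
    (fun x hx => phi_pos m hx.1) ht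

/-- the constant for the key estimate -/
noncomputable def Km (m : ℕ) : ℝ := Cm m + 4 ^ (m + 1)

/-- the product `(-log x) · log(-log x) ⋯ log_m(-log x)` -/
noncomputable def PP (m : ℕ) (x : ℝ) : ℝ :=
  ∏ i ∈ Finset.range (m + 1), Real.log^[i] (-Real.log x)

lemma Km_pos (m : ℕ) : 0 < Km m := by
  have h1 := Cm_nonneg m
  have h2 : (0:ℝ) < 4 ^ (m+1) := by positivity
  unfold Km; linarith

lemma delta_cond {m : ℕ} {t : ℝ} (ht : 0 < t)
    (htδ : t ≤ Real.exp (-(expIter (m + 2)))) : expIter (m + 2) ≤ -Real.log t := by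
  have := Real.log_le_log ht htδ
  rw [Real.log_exp] at this
  linarith

lemma one_le_PP {m : ℕ} {x : ℝ} (hx : expIter (m + 2) ≤ -Real.log x) : 1 ≤ PP m x := by
  unfold PP
  calc (1:ℝ) = ∏ _i ∈ Finset.range (m+1), 1 := by simp
  _ ≤ ∏ i ∈ Finset.range (m+1), Real.log^[i] (-Real.log x) := by
    refine Finset.prod_le_prod (by intros; norm_num) (fun i hi => ?_)
    exact one_le_iterLog (by have := Finset.mem_range.1 hi; omega) hx

lemma PP_pos {m : ℕ} {x : ℝ} (hx : expIter (m + 2) ≤ -Real.log x) : 0 < PP m x :=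
  lt_of_lt_of_le one_pos (one_le_PP hx)

lemma phi_bound {m : ℕ} {t s : ℝ} (ht : 0 < t)
    (htδ : t ≤ Real.exp (-(expIter (m + 2)))) (hs : s ∈ Icc (t^2) t) :
    phiThetaM m s ≤ 4 ^ (m + 1) * t * (PP m t) ^ 2 := by
  obtain ⟨hs1, hs2⟩ := hs
  have ht2 : (0:ℝ) < t^2 := by positivity
  have hs0 : 0 < s := lt_of_lt_of_le ht2 hs1
  have hE2 : (2:ℝ) ≤ expIter (m+2) := by
    have h1 := Real.add_one_le_exp (expIter (m+1))
    have h2 := one_le_expIter (m+1)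
    have h3 : expIter (m+2) = Real.exp (expIter (m+1)) := rfl
    linarith
  have hδe : Real.exp (-(expIter (m+2))) < Real.exp (-1) := Real.exp_lt_exp.2 (by linarith)
  have hse : s < Real.exp (-1) := lt_of_le_of_lt (hs2.trans htδ) hδe
  have hs1' : s < 1 := by
    have : Real.exp (-1) < 1 := by
      calc Real.exp (-1) < Real.exp 0 := Real.exp_lt_exp.2 (by norm_num)
      _ = 1 := Real.exp_zero
    linarith
  have hLt : expIter (m+2) ≤ -Real.log t := delta_cond ht htδ
  have hLs : -Real.log t ≤ -Real.log s := by
    have := Real.log_le_log hs0 hs2; linarith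
  have hLsE : expIter (m+2) ≤ -Real.log s := hLt.trans hLs
  set Lt := -Real.log t with hLtdef
  set Ls := -Real.log s with hLsdef
  have hLt1 : (1:ℝ) ≤ Lt := (one_le_expIter _).trans hLt
  have hLtpos : (0:ℝ) < Lt := by linarith
  have hLs1 : (1:ℝ) ≤ Ls := (one_le_expIter _).trans hLsE
  have hLs2 : Ls ≤ 2 * Lt := by
    have h1 : Real.log (t^2) ≤ Real.log s := Real.log_le_log ht2 hs1
    rw [Real.log_pow] at h1
    push_cast at h1
    simp only [hLsdef, hLtdef]
    linarith
  have hslog : Real.log s < 0 := Real.log_neg hs0 hs1'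
  have habs : |Real.log s| = Ls := abs_of_neg hslog
  have hφ : phiThetaM m s = s * Ls * ThetaM m Ls := by
    unfold phiThetaM
    rw [if_neg (not_le.2 hs0), if_pos hse, habs]
  have hEm : expIter m ≤ Ls := (expIter_mono (by omega)).trans hLsE
  rw [hφ, ThetaM_eq_of_ge hEm]
  set A := ∏ k ∈ Finset.range m, (Real.log^[k+1] Ls) ^ 2 with hA
  set B := ∏ k ∈ Finset.range m, (Real.log^[k+1] Lt) ^ 2 with hB
  have hfac : ∀ k, k < m → Real.log^[k+1] Ls ≤ 2 * Real.log^[k+1] Lt := by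
    intro k hk
    have hr := iterLog_ratio (k+1) (m+1) (by omega) Lt Ls hLt hLs
    have hnn : 0 ≤ Real.log^[k+1] Lt :=
      le_trans zero_le_one (one_le_iterLog (show k+1 ≤ m+2 by omega) hLt)
    have h2 : Ls * Real.log^[k+1] Lt ≤ 2 * Lt * Real.log^[k+1] Lt :=
      mul_le_mul_of_nonneg_right hLs2 hnn
    have h3 : Lt * Real.log^[k+1] Ls ≤ Lt * (2 * Real.log^[k+1] Lt) := by
      have := hr.trans h2; linarith [this]
    exact le_of_mul_le_mul_left h3 hLtpos
  have hAB : A ≤ 4 ^ m * B := by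
    have hprod : A ≤ ∏ k ∈ Finset.range m, (2 * Real.log^[k+1] Lt) ^ 2 := by
      refine Finset.prod_le_prod (fun _ _ => sq_nonneg _) (fun k hk => ?_)
      have h0 : 0 ≤ Real.log^[k+1] Ls :=
        le_trans zero_le_one (one_le_iterLog
          (show k+1 ≤ m+2 by have := Finset.mem_range.1 hk; omega) hLsE)
      exact pow_le_pow_left₀ h0 (hfac k (Finset.mem_range.1 hk)) 2
    have hprodeq : ∏ k ∈ Finset.range m, (2 * Real.log^[k+1] Lt) ^ 2 = 4 ^ m * B := by
      calc ∏ k ∈ Finset.range m, (2 * Real.log^[k+1] Lt) ^ 2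
          = ∏ k ∈ Finset.range m, (4 * (Real.log^[k+1] Lt) ^ 2) :=
            Finset.prod_congr rfl (fun k _ => by ring)
      _ = 4 ^ m * B := by
          rw [Finset.prod_mul_distrib, Finset.prod_const, Finset.card_range]
    exact hprod.trans_eq hprodeq
  have hPP : (PP m t) ^ 2 = Lt ^ 2 * B := by
    have h1 : PP m t = (∏ k ∈ Finset.range m, Real.log^[k+1] Lt) * Lt := by
      unfold PP
      rw [Finset.prod_range_succ']
      simp [hLtdef]
    rw [h1, mul_pow, ← Finset.prod_pow, ← hB]
    ring
  have hAnn : 0 ≤ A := Finset.prod_nonneg (fun _ _ => sq_nonneg _)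
  have hBnn : 0 ≤ B := Finset.prod_nonneg (fun _ _ => sq_nonneg _)
  have hLs0 : (0:ℝ) ≤ Ls := by linarith
  have key : s * Ls * (Ls * A) ≤ t * (2 * Lt) * ((2 * Lt) * (4 ^ m * B)) := by
    gcongr
  rw [hPP]
  calc s * Ls * (Ls * A) ≤ t * (2 * Lt) * ((2 * Lt) * (4 ^ m * B)) := key
  _ = 4 ^ (m+1) * t * (Lt ^ 2 * B) := by ring

lemma Phi_le {m : ℕ} {t : ℝ} (ht : 0 < t)
    (htδ : t ≤ Real.exp (-(expIter (m + 2)))) :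
    (∫ s in (0:ℝ)..t, phiThetaM m s) ≤ Km m * (t * PP m t) ^ 2 := by
  have hδ1 : Real.exp (-(expIter (m+2))) ≤ 1 := by
    rw [← Real.exp_zero]
    exact Real.exp_le_exp.2 (by linarith [one_le_expIter (m+2)])
  have ht1 : t ≤ 1 := htδ.trans hδ1
  have ht2 : t^2 ≤ t := by nlinarith
  have hsplit : (∫ s in (0:ℝ)..t, phiThetaM m s) =
      (∫ s in (0:ℝ)..t^2, phiThetaM m s) + ∫ s in (t^2)..t, phiThetaM m s :=
    (intervalIntegral.integral_add_adjacent_intervals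
      (phi_intervalIntegrable m 0 (t^2)) (phi_intervalIntegrable m (t^2) t)).symm
  have hb1 : (∫ s in (0:ℝ)..t^2, phiThetaM m s) ≤ Cm m * t^2 := by
    have h := intervalIntegral.integral_mono_on (by positivity)
      (phi_intervalIntegrable m 0 (t^2)) intervalIntegrable_const
      (fun x _ => phi_le_Cm m x)
    rw [intervalIntegral.integral_const] at h
    simpa [smul_eq_mul, mul_comm] using h
  have hb2 : (∫ s in (t^2)..t, phiThetaM m s) ≤ (t - t^2) * (4 ^ (m+1) * t * (PP m t) ^ 2) := by
    have h := intervalIntegral.integral_mono_on ht2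
      (phi_intervalIntegrable m (t^2) t) intervalIntegrable_const
      (fun x hx => phi_bound ht htδ hx)
    rw [intervalIntegral.integral_const] at h
    simpa [smul_eq_mul] using h
  have hLt : expIter (m+2) ≤ -Real.log t := delta_cond ht htδ
  have hPP1 : 1 ≤ PP m t := one_le_PP hLt
  have hPP2 : 1 ≤ (PP m t) ^ 2 := by nlinarith
  have e1 : 0 ≤ Cm m * t^2 * ((PP m t)^2 - 1) :=
    mul_nonneg (mul_nonneg (Cm_nonneg m) (sq_nonneg t)) (by linarith)
  have e2 : (t - t^2) * (4 ^ (m+1) * t * (PP m t) ^ 2) ≤ t * (4 ^ (m+1) * t * (PP m t) ^ 2) := by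
    apply mul_le_mul_of_nonneg_right (by nlinarith [sq_nonneg t])
    have h4 : (0:ℝ) ≤ 4 ^ (m+1) := by positivity
    exact mul_nonneg (mul_nonneg h4 ht.le) (sq_nonneg _)
  rw [hsplit]
  have hKm : Km m * (t * PP m t) ^ 2 = Cm m * t^2 * (PP m t)^2 + 4^(m+1) * t^2 * (PP m t)^2 := by
    unfold Km; ring
  rw [hKm]
  nlinarith [hb1, hb2, e1, e2]

lemma hasDerivAt_iterLog_comp (m : ℕ) : ∀ (j : ℕ) {t : ℝ}, 0 < t →
    (∀ i, i < j → 0 < Real.log^[i] (-Real.log t)) →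
    HasDerivAt (fun x => Real.log^[j] (-Real.log x))
      (-(t * ∏ i ∈ Finset.range j, Real.log^[i] (-Real.log t))⁻¹) t := by
  intro j
  induction j with
  | zero =>
    intro t ht _
    have h := (Real.hasDerivAt_log ht.ne').neg
    simp only [Function.iterate_zero_apply, Finset.range_zero, Finset.prod_empty, mul_one]
    exact h
  | succ j ih =>
    intro t ht hpos
    have hpos' : ∀ i, i < j → 0 < Real.log^[i] (-Real.log t) :=
      fun i hi => hpos i (hi.trans (Nat.lt_succ_self j))
    have hd := ih ht hpos'
    have hgpos : 0 < Real.log^[j] (-Real.log t) := hpos j (Nat.lt_succ_self j)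
    have h2 := hd.log hgpos.ne'
    have heq : (fun x => Real.log (Real.log^[j] (-Real.log x))) =
        fun x => Real.log^[j+1] (-Real.log x) := by
      funext x; rw [Function.iterate_succ_apply']
    rw [heq] at h2
    convert h2 using 1
    have hQpos : 0 < ∏ i ∈ Finset.range j, Real.log^[i] (-Real.log t) :=
      Finset.prod_pos (fun i hi => hpos' i (Finset.mem_range.1 hi))
    rw [Finset.prod_range_succ]
    field_simp

lemma continuousOn_iterLog_comp : ∀ (j : ℕ) (s : Set ℝ), (∀ x ∈ s, (0:ℝ) < x) →
    (∀ x ∈ s, ∀ i, i < j → 0 < Real.log^[i] (-Real.log x)) →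
    ContinuousOn (fun x => Real.log^[j] (-Real.log x)) s := by
  intro j
  induction j with
  | zero =>
    intro s h0 _
    simp only [Function.iterate_zero_apply]
    exact (Real.continuousOn_log.mono (fun x hx => by simp [(h0 x hx).ne'])).neg
  | succ j ih =>
    intro s h0 hp
    have hc := ih s h0 (fun x hx i hi => hp x hx i (hi.trans (Nat.lt_succ_self j)))
    have := hc.log (fun x hx => (hp x hx j (Nat.lt_succ_self j)).ne')
    simpa only [Function.iterate_succ_apply'] using this

lemma tendsto_iterLog_atTop : ∀ j : ℕ, Tendsto (Real.log^[j]) atTop atTop := by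
  intro j
  induction j with
  | zero => simpa using tendsto_id
  | succ j ih =>
    rw [Function.iterate_succ']
    exact Real.tendsto_log_atTop.comp ih

end Stmt14Aux

open Stmt14Aux

/-- `Φ_{Θ_m}(t) = ∫₀ᵗ φ_{Θ_m}` satisfies the second-order Osgood condition
`∫_{0+} dt/√(Φ_{Θ_m}(t)) = +∞`. -/
theorem stmt14 (m : ℕ) :
    Tendsto
      (fun a : ℝ =>
        ∫ t in a..Real.exp (-1),
          (Real.sqrt (∫ s in (0:ℝ)..t, phiThetaM m s))⁻¹)
      (𝓝[>] (0:ℝ)) atTop := by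
  classical
  set δ : ℝ := Real.exp (-(expIter (m+2))) with hδdef
  have hδpos : 0 < δ := Real.exp_pos _
  have hE1 : (1:ℝ) ≤ expIter (m+2) := one_le_expIter _
  have hδe : δ ≤ Real.exp (-1) := Real.exp_le_exp.2 (by linarith)
  set G : ℝ → ℝ := fun t => (Real.sqrt (∫ s in (0:ℝ)..t, phiThetaM m s))⁻¹ with hGdef
  have hGnonneg : ∀ t, 0 ≤ G t := fun t => inv_nonneg.2 (Real.sqrt_nonneg _)
  set F : ℝ → ℝ := fun x => Real.log^[m+1] (-Real.log x) with hFdef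
  set c : ℝ := (Real.sqrt (Km m))⁻¹ with hcdef
  have hc : 0 < c := inv_pos.2 (Real.sqrt_pos.2 (Km_pos m))
  have main : ∀ a ∈ Ioo (0:ℝ) δ, c * (F a - F δ) ≤ ∫ t in a..Real.exp (-1), G t := by
    rintro a ⟨ha0, haδ⟩
    have hsub : ∀ x ∈ Icc a (Real.exp (-1)), (0:ℝ) < x :=
      fun x hx => lt_of_lt_of_le ha0 hx.1
    have hGcont : ContinuousOn G (Icc a (Real.exp (-1))) := by
      apply ContinuousOn.inv₀
      · exact (Real.continuous_sqrt.comp (continuous_Phi m)).continuousOn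
      · intro x hx
        exact (Real.sqrt_pos.2 (Phi_pos m (hsub x hx))).ne'
    have huIccaδ : uIcc a δ = Icc a δ := uIcc_of_le haδ.le
    have hInt1 : IntervalIntegrable G volume a δ := by
      apply ContinuousOn.intervalIntegrable
      rw [huIccaδ]
      exact hGcont.mono (Icc_subset_Icc le_rfl hδe)
    have hInt2 : IntervalIntegrable G volume δ (Real.exp (-1)) := by
      apply ContinuousOn.intervalIntegrable
      rw [uIcc_of_le hδe]
      exact hGcont.mono (Icc_subset_Icc haδ.le le_rfl)
    have hadd : ∫ t in a..Real.exp (-1), G t =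
        (∫ t in a..δ, G t) + ∫ t in δ..Real.exp (-1), G t :=
      (intervalIntegral.integral_add_adjacent_intervals hInt1 hInt2).symm
    have h2nn : 0 ≤ ∫ t in δ..Real.exp (-1), G t :=
      intervalIntegral.integral_nonneg hδe (fun u _ => hGnonneg u)
    have hcond : ∀ x ∈ Icc a δ, expIter (m+2) ≤ -Real.log x :=
      fun x hx => delta_cond (lt_of_lt_of_le ha0 hx.1) hx.2
    have hposIter : ∀ x ∈ Icc a δ, ∀ i, i < m+1 → 0 < Real.log^[i] (-Real.log x) :=
      fun x hx i hi => iterLog_pos (show i ≤ m+2 by omega) (hcond x hx)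
    have hPcont : ContinuousOn (fun x => x * PP m x) (Icc a δ) := by
      apply ContinuousOn.mul continuousOn_id
      unfold PP
      apply continuousOn_finset_prod
      intro i hi
      exact continuousOn_iterLog_comp i (Icc a δ) (fun x hx => lt_of_lt_of_le ha0 hx.1)
        (fun x hx j hj => hposIter x hx j (by have := Finset.mem_range.1 hi; omega))
    have hPne : ∀ x ∈ Icc a δ, x * PP m x ≠ 0 :=
      fun x hx => (mul_pos (lt_of_lt_of_le ha0 hx.1) (PP_pos (hcond x hx))).ne'
    have hlow_cont : ContinuousOn (fun x => c * (x * PP m x)⁻¹) (Icc a δ) :=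
      continuousOn_const.mul (hPcont.inv₀ hPne)
    have hIntLow : IntervalIntegrable (fun x => c * (x * PP m x)⁻¹) volume a δ := by
      apply ContinuousOn.intervalIntegrable
      rw [huIccaδ]; exact hlow_cont
    have hpt : ∀ x ∈ Icc a δ, c * (x * PP m x)⁻¹ ≤ G x := by
      intro x hx
      have hx0 : 0 < x := lt_of_lt_of_le ha0 hx.1
      have hxP : 0 < x * PP m x := mul_pos hx0 (PP_pos (hcond x hx))
      have hΦle : (∫ s in (0:ℝ)..x, phiThetaM m s) ≤ Km m * (x * PP m x)^2 :=
        Phi_le hx0 hx.2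
      have hsq : Real.sqrt (∫ s in (0:ℝ)..x, phiThetaM m s) ≤
          Real.sqrt (Km m) * (x * PP m x) := by
        have h1 := Real.sqrt_le_sqrt hΦle
        rwa [Real.sqrt_mul (Km_pos m).le, Real.sqrt_sq hxP.le] at h1
      have hΦpos : 0 < Real.sqrt (∫ s in (0:ℝ)..x, phiThetaM m s) :=
        Real.sqrt_pos.2 (Phi_pos m hx0)
      have hinv : (Real.sqrt (Km m) * (x * PP m x))⁻¹ ≤
          (Real.sqrt (∫ s in (0:ℝ)..x, phiThetaM m s))⁻¹ := inv_anti₀ hΦpos hsq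
      calc c * (x * PP m x)⁻¹ = (Real.sqrt (Km m) * (x * PP m x))⁻¹ := by
            rw [hcdef, ← mul_inv]
      _ ≤ G x := hinv
    have hmono : (∫ x in a..δ, c * (x * PP m x)⁻¹) ≤ ∫ x in a..δ, G x :=
      intervalIntegral.integral_mono_on haδ.le hIntLow hInt1 hpt
    have hderiv : ∀ x ∈ uIcc a δ, HasDerivAt F (-(x * PP m x)⁻¹) x := by
      intro x hx
      rw [huIccaδ] at hx
      have hx0 : 0 < x := lt_of_lt_of_le ha0 hx.1
      have h := hasDerivAt_iterLog_comp m (m+1) hx0 (hposIter x hx)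
      simpa [hFdef, PP] using h
    have hIntDer : IntervalIntegrable (fun x => -(x * PP m x)⁻¹) volume a δ := by
      apply ContinuousOn.intervalIntegrable
      rw [huIccaδ]
      exact (hPcont.inv₀ hPne).neg
    have hFTC : (∫ x in a..δ, -(x * PP m x)⁻¹) = F δ - F a :=
      intervalIntegral.integral_eq_sub_of_hasDerivAt hderiv hIntDer
    have hval : (∫ x in a..δ, c * (x * PP m x)⁻¹) = c * (F a - F δ) := by
      rw [intervalIntegral.integral_const_mul]
      have h3 : (∫ x in a..δ, -(x * PP m x)⁻¹) = -∫ x in a..δ, (x * PP m x)⁻¹ :=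
        intervalIntegral.integral_neg
      have h4 : (∫ x in a..δ, (x * PP m x)⁻¹) = F a - F δ := by linarith
      rw [h4]
    rw [hadd, ← hval]
    linarith
  have hF : Tendsto F (𝓝[>] (0:ℝ)) atTop := by
    have h1 : Tendsto (fun a : ℝ => -Real.log a) (𝓝[>] (0:ℝ)) atTop :=
      tendsto_neg_atBot_atTop.comp Real.tendsto_log_nhdsGT_zero
    exact (tendsto_iterLog_atTop (m+1)).comp h1
  have hlim : Tendsto (fun a => c * (F a - F δ)) (𝓝[>] (0:ℝ)) atTop := by
    apply Tendsto.const_mul_atTop hc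
    have := tendsto_atTop_add_const_right (𝓝[>] (0:ℝ)) (-(F δ)) hF
    simpa [sub_eq_add_neg] using this
  refine tendsto_atTop_mono' _ ?_ hlim
  filter_upwards [Ioo_mem_nhdsGT_of_mem (⟨le_rfl, hδpos⟩ : (0:ℝ) ∈ Ico (0:ℝ) δ)] with a ha
    using main a ha
end

section
/- Let d ≥ 2 and let K(x,y) be a measurable antisymmetric kernel (K(x,y) = −K(y,x)). Let μ₁, μ₂ ∈ P₁(ℝ^{2d}) with densities f₁, f₂, let π ∈ Plan(μ₁, μ₂) be a coupling, and suppose ∫ |K(h, X₁(o)) − K(h, X₂(o'))| ρ₂(h) dh ≤ φ(|X₁(o) − X₂(o')|) for all o, o' where ρ₂ is a nonnegative density with ∫ρ₂ = 1 and X₁, X₂ : ℝ^{2d} → ℝ^d are measurable. Then ∫∫ |∫ K(X₂(q), X₁(o)) dμ₁(o) − ∫ K(X₂(q), X₂(o')) dμ₂(o')| dπ(p,q) ≤ ∫∫ φ(|X₁(o) − X₂(o')|) dπ(o,o'), where the outer integral over q uses that (X₂)_#(second marginal) has density ρ₂. -/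
open MeasureTheory Real Set
open scoped ENNReal NNReal

/-- Key coupling estimate in the Lagrangian stability proof: for an antisymmetric
kernel `K`, probability measures `μ₁, μ₂` coupled by `P ∈ Plan(μ₁,μ₂)`, maps
`X₁, X₂` with `(X₂)_# μ₂` of density `ρ₂`, and a nondecreasing `φ` controlling
`∫ |K(h, X₁(o)) − K(h, X₂(o'))| ρ₂(h) dh ≤ φ(|X₁(o) − X₂(o')|)`, one has
`∬ |∫ K(X₂(q), X₁(o)) dμ₁(o) − ∫ K(X₂(q), X₂(o')) dμ₂(o')| dP(p,q)
  ≤ ∬ φ(|X₁(o) − X₂(o')|) dP(o,o')`. -/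
theorem stmt19 (d : ℕ) (hd : 2 ≤ d)
    (K : EuclideanSpace ℝ (Fin d) → EuclideanSpace ℝ (Fin d) → EuclideanSpace ℝ (Fin d))
    (hKmeas : Measurable (fun q : EuclideanSpace ℝ (Fin d) × EuclideanSpace ℝ (Fin d) =>
      K q.1 q.2))
    (hKanti : ∀ x y, K x y = - K y x)
    (μ₁ μ₂ : Measure (EuclideanSpace ℝ (Fin d) × EuclideanSpace ℝ (Fin d)))
    [IsProbabilityMeasure μ₁] [IsProbabilityMeasure μ₂]
    (P : Measure ((EuclideanSpace ℝ (Fin d) × EuclideanSpace ℝ (Fin d)) ×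
      (EuclideanSpace ℝ (Fin d) × EuclideanSpace ℝ (Fin d))))
    [IsProbabilityMeasure P]
    (hP₁ : P.map Prod.fst = μ₁) (hP₂ : P.map Prod.snd = μ₂)
    (X₁ X₂ : EuclideanSpace ℝ (Fin d) × EuclideanSpace ℝ (Fin d) → EuclideanSpace ℝ (Fin d))
    (hX₁ : Measurable X₁) (hX₂ : Measurable X₂)
    (ρ₂ : EuclideanSpace ℝ (Fin d) → ℝ) (hρmeas : Measurable ρ₂)
    (hρnn : ∀ h, 0 ≤ ρ₂ h) (hρint : Integrable ρ₂) (hρmass : (∫ h, ρ₂ h) = 1)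
    (hpush : μ₂.map X₂ = volume.withDensity (fun h => ENNReal.ofReal (ρ₂ h)))
    (φ : ℝ → ℝ) (hφmono : Monotone φ) (hφnn : ∀ r, 0 ≤ φ r)
    (hK₁int : ∀ h, Integrable (fun o => K h (X₁ o)) μ₁)
    (hK₂int : ∀ h, Integrable (fun o' => K h (X₂ o')) μ₂)
    (hφint : Integrable (fun oo' => φ ‖X₁ oo'.1 - X₂ oo'.2‖) P)
    (hkey : ∀ o o', (∫ h, ‖K h (X₁ o) - K h (X₂ o')‖ * ρ₂ h)
      ≤ φ ‖X₁ o - X₂ o'‖) :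
    (∫ pq, ‖(∫ o, K (X₂ pq.2) (X₁ o) ∂μ₁) - ∫ o', K (X₂ pq.2) (X₂ o') ∂μ₂‖ ∂P)
      ≤ ∫ oo', φ ‖X₁ oo'.1 - X₂ oo'.2‖ ∂P := by
  classical
  -- measurability of the kernel in each variable
  have hKm2 : ∀ h, Measurable fun x => K h x := fun h =>
    hKmeas.comp (measurable_const.prodMk measurable_id)
  -- the difference kernel, measurable on the product
  have hdiffm : Measurable (fun p : EuclideanSpace ℝ (Fin d) ×
      ((EuclideanSpace ℝ (Fin d) × EuclideanSpace ℝ (Fin d)) ×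
        (EuclideanSpace ℝ (Fin d) × EuclideanSpace ℝ (Fin d))) =>
      K p.1 (X₁ p.2.1) - K p.1 (X₂ p.2.2)) :=
    (hKmeas.comp (measurable_fst.prodMk
        (hX₁.comp (measurable_fst.comp measurable_snd)))).sub
      (hKmeas.comp (measurable_fst.prodMk (hX₂.comp (measurable_snd.comp measurable_snd))))
  -- integrability of `h ↦ K h x` w.r.t. the pushforward, using antisymmetry and hK₂int
  have hintK : ∀ x, Integrable (fun h => K h x) (μ₂.map X₂) := by
    intro x
    have hm : AEStronglyMeasurable (fun y => K x y) (μ₂.map X₂) :=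
      (hKm2 x).aestronglyMeasurable
    have h2 : Integrable (fun y => K x y) (μ₂.map X₂) :=
      (integrable_map_measure hm hX₂.aemeasurable).mpr (hK₂int x)
    have h3 : (fun h => K h x) = fun h => -(K x h) := by
      funext h; rw [hKanti]
    rw [h3]
    exact h2.neg
  have hdiffν : ∀ a b, Integrable (fun h => K h a - K h b) (μ₂.map X₂) := fun a b =>
    (hintK a).sub (hintK b)
  -- key estimate, rephrased with the pushforward measure
  have hkeyν : ∀ o o', (∫ h, ‖K h (X₁ o) - K h (X₂ o')‖ ∂(μ₂.map X₂))
      ≤ φ ‖X₁ o - X₂ o'‖ := by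
    intro o o'
    have hm : Measurable fun h => Real.toNNReal (ρ₂ h) := hρmeas.real_toNNReal
    have hdens : μ₂.map X₂ = volume.withDensity
        (fun h => ((Real.toNNReal (ρ₂ h) : ℝ≥0) : ℝ≥0∞)) := by
      rw [hpush]; rfl
    rw [hdens, integral_withDensity_eq_integral_smul hm]
    have heq : (fun h => Real.toNNReal (ρ₂ h) • ‖K h (X₁ o) - K h (X₂ o')‖)
        = fun h => ‖K h (X₁ o) - K h (X₂ o')‖ * ρ₂ h := by
      funext h
      rw [NNReal.smul_def, Real.coe_toNNReal _ (hρnn h), smul_eq_mul, mul_comm]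
    rw [heq]
    exact hkey o o'
  -- pointwise lintegral form of the key estimate
  have hub : ∀ oo' : (EuclideanSpace ℝ (Fin d) × EuclideanSpace ℝ (Fin d)) ×
      (EuclideanSpace ℝ (Fin d) × EuclideanSpace ℝ (Fin d)),
      (∫⁻ h, (‖K h (X₁ oo'.1) - K h (X₂ oo'.2)‖₊ : ℝ≥0∞) ∂(μ₂.map X₂))
        ≤ ENNReal.ofReal (φ ‖X₁ oo'.1 - X₂ oo'.2‖) := by
    intro oo'
    have h1 : ENNReal.ofReal (∫ h, ‖K h (X₁ oo'.1) - K h (X₂ oo'.2)‖ ∂(μ₂.map X₂))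
        = ∫⁻ h, ENNReal.ofReal ‖K h (X₁ oo'.1) - K h (X₂ oo'.2)‖ ∂(μ₂.map X₂) :=
      ofReal_integral_eq_lintegral_ofReal (hdiffν _ _).norm
        (Filter.Eventually.of_forall fun h => norm_nonneg _)
    calc (∫⁻ h, (‖K h (X₁ oo'.1) - K h (X₂ oo'.2)‖₊ : ℝ≥0∞) ∂(μ₂.map X₂))
        = ∫⁻ h, ENNReal.ofReal ‖K h (X₁ oo'.1) - K h (X₂ oo'.2)‖ ∂(μ₂.map X₂) := by
          simp_rw [ofReal_norm, enorm_eq_nnnorm]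
      _ = ENNReal.ofReal (∫ h, ‖K h (X₁ oo'.1) - K h (X₂ oo'.2)‖ ∂(μ₂.map X₂)) := h1.symm
      _ ≤ ENNReal.ofReal (φ ‖X₁ oo'.1 - X₂ oo'.2‖) :=
          ENNReal.ofReal_le_ofReal (hkeyν oo'.1 oo'.2)
  -- integrability of the two pieces over P
  have hP₁int : ∀ h, Integrable (fun oo' : (EuclideanSpace ℝ (Fin d) × EuclideanSpace ℝ (Fin d)) ×
      (EuclideanSpace ℝ (Fin d) × EuclideanSpace ℝ (Fin d)) => K h (X₁ oo'.1)) P := by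
    intro h
    have hm : AEStronglyMeasurable (fun o => K h (X₁ o)) (P.map Prod.fst) :=
      ((hKm2 h).comp hX₁).aestronglyMeasurable
    have h1 : Integrable (fun o => K h (X₁ o)) (P.map Prod.fst) := by rw [hP₁]; exact hK₁int h
    exact (integrable_map_measure hm measurable_fst.aemeasurable).mp h1
  have hP₂int : ∀ h, Integrable (fun oo' : (EuclideanSpace ℝ (Fin d) × EuclideanSpace ℝ (Fin d)) ×
      (EuclideanSpace ℝ (Fin d) × EuclideanSpace ℝ (Fin d)) => K h (X₂ oo'.2)) P := by
    intro h
    have hm : AEStronglyMeasurable (fun o' => K h (X₂ o')) (P.map Prod.snd) :=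
      ((hKm2 h).comp hX₂).aestronglyMeasurable
    have h1 : Integrable (fun o' => K h (X₂ o')) (P.map Prod.snd) := by rw [hP₂]; exact hK₂int h
    exact (integrable_map_measure hm measurable_snd.aemeasurable).mp h1
  -- rewriting the inner difference of integrals as a single integral over P
  have hFeq : ∀ h, (∫ o, K h (X₁ o) ∂μ₁) - (∫ o', K h (X₂ o') ∂μ₂)
      = ∫ oo', (K h (X₁ oo'.1) - K h (X₂ oo'.2)) ∂P := by
    intro h
    have hm1 : AEStronglyMeasurable (fun o => K h (X₁ o)) (P.map Prod.fst) :=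
      ((hKm2 h).comp hX₁).aestronglyMeasurable
    have hm2 : AEStronglyMeasurable (fun o' => K h (X₂ o')) (P.map Prod.snd) :=
      ((hKm2 h).comp hX₂).aestronglyMeasurable
    rw [integral_sub (hP₁int h) (hP₂int h)]
    congr 1
    · rw [← hP₁]
      exact integral_map measurable_fst.aemeasurable hm1
    · rw [← hP₂]
      exact integral_map measurable_snd.aemeasurable hm2
  -- pointwise bound on the norm of the inner difference
  have hFle : ∀ h, (‖(∫ o, K h (X₁ o) ∂μ₁) - ∫ o', K h (X₂ o') ∂μ₂‖₊ : ℝ≥0∞)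
      ≤ ∫⁻ oo', (‖K h (X₁ oo'.1) - K h (X₂ oo'.2)‖₊ : ℝ≥0∞) ∂P := by
    intro h
    rw [hFeq h]
    exact enorm_integral_le_lintegral_enorm _
  -- measurability of the function F
  have hFmeas : Measurable fun h =>
      (∫ o, K h (X₁ o) ∂μ₁) - ∫ o', K h (X₂ o') ∂μ₂ := by
    have h1 : StronglyMeasurable fun h => ∫ o, K h (X₁ o) ∂μ₁ :=
      (hKmeas.comp (measurable_fst.prodMk
        (hX₁.comp measurable_snd))).stronglyMeasurable.integral_prod_right'
    have h2 : StronglyMeasurable fun h => ∫ o', K h (X₂ o') ∂μ₂ :=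
      (hKmeas.comp (measurable_fst.prodMk
        (hX₂.comp measurable_snd))).stronglyMeasurable.integral_prod_right'
    exact (h1.sub h2).measurable
  -- measurability of G h = ∫⁻ ‖diff‖₊ dP
  have hGmeas : Measurable fun h =>
      ∫⁻ oo', (‖K h (X₁ oo'.1) - K h (X₂ oo'.2)‖₊ : ℝ≥0∞) ∂P :=
    hdiffm.enorm.lintegral_prod_right'
  -- finiteness of the right-hand side lintegral
  have hRHS : (∫⁻ oo', ENNReal.ofReal (φ ‖X₁ oo'.1 - X₂ oo'.2‖) ∂P) ≠ ∞ := by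
    have h1 : (∫⁻ oo', (‖φ ‖X₁ oo'.1 - X₂ oo'.2‖‖₊ : ℝ≥0∞) ∂P) < ∞ :=
      hφint.hasFiniteIntegral
    refine ne_of_lt (lt_of_le_of_lt (le_of_eq (lintegral_congr fun oo' => ?_)) h1)
    rw [← enorm_eq_nnnorm, ← ofReal_norm, Real.norm_of_nonneg (hφnn _)]
  -- the main lintegral chain
  have hchain : (∫⁻ pq, ENNReal.ofReal
        ‖(∫ o, K (X₂ pq.2) (X₁ o) ∂μ₁) - ∫ o', K (X₂ pq.2) (X₂ o') ∂μ₂‖ ∂P)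
      ≤ ∫⁻ oo', ENNReal.ofReal (φ ‖X₁ oo'.1 - X₂ oo'.2‖) ∂P := by
    calc (∫⁻ pq, ENNReal.ofReal
          ‖(∫ o, K (X₂ pq.2) (X₁ o) ∂μ₁) - ∫ o', K (X₂ pq.2) (X₂ o') ∂μ₂‖ ∂P)
        = ∫⁻ pq, (‖(∫ o, K (X₂ pq.2) (X₁ o) ∂μ₁) -
            ∫ o', K (X₂ pq.2) (X₂ o') ∂μ₂‖₊ : ℝ≥0∞) ∂P := by
          simp_rw [ofReal_norm, enorm_eq_nnnorm]
      _ ≤ ∫⁻ pq, (∫⁻ oo', (‖K (X₂ pq.2) (X₁ oo'.1) -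
            K (X₂ pq.2) (X₂ oo'.2)‖₊ : ℝ≥0∞) ∂P) ∂P :=
          lintegral_mono fun pq => hFle (X₂ pq.2)
      _ = ∫⁻ h, (∫⁻ oo', (‖K h (X₁ oo'.1) - K h (X₂ oo'.2)‖₊ : ℝ≥0∞) ∂P) ∂(μ₂.map X₂) := by
          rw [← hP₂, Measure.map_map hX₂ measurable_snd,
            lintegral_map hGmeas (hX₂.comp measurable_snd)]
          rfl
      _ = ∫⁻ oo', (∫⁻ h, (‖K h (X₁ oo'.1) - K h (X₂ oo'.2)‖₊ : ℝ≥0∞) ∂(μ₂.map X₂)) ∂P :=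
          lintegral_lintegral_swap hdiffm.enorm.aemeasurable
      _ ≤ ∫⁻ oo', ENNReal.ofReal (φ ‖X₁ oo'.1 - X₂ oo'.2‖) ∂P :=
          lintegral_mono fun oo' => hub oo'
  -- conclude, converting both Bochner integrals to lintegrals
  have hL : (∫ pq, ‖(∫ o, K (X₂ pq.2) (X₁ o) ∂μ₁) - ∫ o', K (X₂ pq.2) (X₂ o') ∂μ₂‖ ∂P)
      = (∫⁻ pq, ENNReal.ofReal
        ‖(∫ o, K (X₂ pq.2) (X₁ o) ∂μ₁) - ∫ o', K (X₂ pq.2) (X₂ o') ∂μ₂‖ ∂P).toReal := by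
    refine integral_eq_lintegral_of_nonneg_ae
      (Filter.Eventually.of_forall fun pq => norm_nonneg _) ?_
    exact ((hFmeas.comp (hX₂.comp measurable_snd)).norm).aestronglyMeasurable
  have hR : (∫ oo', φ ‖X₁ oo'.1 - X₂ oo'.2‖ ∂P)
      = (∫⁻ oo', ENNReal.ofReal (φ ‖X₁ oo'.1 - X₂ oo'.2‖) ∂P).toReal := by
    refine integral_eq_lintegral_of_nonneg_ae
      (Filter.Eventually.of_forall fun oo' => hφnn _) ?_
    exact hφint.aestronglyMeasurable
  rw [hL, hR]
  exact ENNReal.toReal_mono hRHS hchain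
end
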